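/- arXiv:1001.4909 — 2 statements merged into one kernel-verified Lean document; each statement's English description precedes it below -/
import Mathlib

section
/- Suppose for each h = 1,…,u an integer z_h is fixed (z_h = 0 if q_h = 1, and 1 ≤ z_h ≤ q_h − 1 otherwise) together with tuples Z_h of z_h functions and L_h of 2(q_h − z_h − 1) functions, each a polynomial of degree at most 2 in the momenta (P_{ij}, p_{h−1} < i < j ≤ p_h), such that every element of Z_h Poisson-commutes with every element of (Z_h, L_h) (with Z_h = L_h = ∅ when q_h = 1). Let 1 ≤ k' ≤ u, let r^{(1)} = s, r^{(2)}, …, r^{(u)} ∈ ℤ^u be linearly independent, and let m^{(1)}, …, m^{(u−k')} ∈ ℤ^u be linearly independent with r^{(h)} · m^{(j)} = 0 for all h ≤ k' and j ≤ u−k'. Consider the tuple F = (J_{r^{(1)}}, …, J_{r^{(k')}}, Z_1, …, Z_u; J_{r^{(k'+1)}}, …, J_{r^{(u)}}, Im R_{m^{(1)}}, …, Im R_{m^{(u−k')}}, L_1, …, L_u). Then F consists of 2n − k functions, where k = k' + Σ_h z_h, and each of the k central elements (J_{r^{(1)}}, …, J_{r^{(k')}}, Z_1, …, Z_u) Poisson-commutes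 with every element of F. -/
noncomputable section

open Complex

/-- Phase space `ℝ^{2n}`: a point is a pair `(x, p)` of vectors in `ℝ^n`. -/
abbrev Phase (n : ℕ) : Type := (Fin n → ℝ) × (Fin n → ℝ)

/-- Poisson bracket of complex-valued functions on phase space:
`{f,g} = ∑ j (∂f/∂p_j ∂g/∂x_j − ∂f/∂x_j ∂g/∂p_j)`. -/
def pb {n : ℕ} (f g : Phase n → ℂ) : Phase n → ℂ := fun w =>
  ∑ j : Fin n,
    (fderiv ℝ f w ((0 : Fin n → ℝ), Pi.single j (1 : ℝ)) *
        fderiv ℝ g w (Pi.single j (1 : ℝ), (0 : Fin n → ℝ)) -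
      fderiv ℝ f w (Pi.single j (1 : ℝ), (0 : Fin n → ℝ)) *
        fderiv ℝ g w ((0 : Fin n → ℝ), Pi.single j (1 : ℝ)))

/-- Poisson bracket of real-valued functions on phase space. -/
def pbR {n : ℕ} (f g : Phase n → ℝ) : Phase n → ℝ := fun w =>
  ∑ j : Fin n,
    (fderiv ℝ f w ((0 : Fin n → ℝ), Pi.single j (1 : ℝ)) *
        fderiv ℝ g w (Pi.single j (1 : ℝ), (0 : Fin n → ℝ)) -
      fderiv ℝ f w (Pi.single j (1 : ℝ), (0 : Fin n → ℝ)) *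
        fderiv ℝ g w ((0 : Fin n → ℝ), Pi.single j (1 : ℝ)))

/-- `z_j = (x_j + i p_j)/√2`. -/
def zf {n : ℕ} (j : Fin n) (w : Phase n) : ℂ :=
  ((w.1 j : ℂ) + Complex.I * (w.2 j : ℂ)) / ((Real.sqrt 2 : ℝ) : ℂ)

/-- `z̄_j = (x_j − i p_j)/√2`. -/
def zbf {n : ℕ} (j : Fin n) (w : Phase n) : ℂ :=
  ((w.1 j : ℂ) - Complex.I * (w.2 j : ℂ)) / ((Real.sqrt 2 : ℝ) : ℂ)

/-- `I_j = z_j z̄_j` (complex-valued; its values are real). -/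
def Iact {n : ℕ} (j : Fin n) (w : Phase n) : ℂ := zf j w * zbf j w

/-- `I_j = (x_j² + p_j²)/2` (real-valued). -/
def IR {n : ℕ} (j : Fin n) (w : Phase n) : ℝ := (w.1 j ^ 2 + w.2 j ^ 2) / 2

/-- A family of real functions on phase space is functionally independent if their
differentials are linearly independent at every point of some dense open set. -/
def FunctionallyIndependent {n : ℕ} {ι : Type*} (f : ι → Phase n → ℝ) : Prop :=
  ∃ U : Set (Phase n), IsOpen U ∧ Dense U ∧
    ∀ w ∈ U, LinearIndependent ℝ (fun i => fderiv ℝ (f i) w)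

/-- The monomial `P_{a,b} = ∏_j z_j^{a_j} z̄_j^{b_j}`. -/
def Pab {n : ℕ} (a b : Fin n → ℕ) (w : Phase n) : ℂ :=
  ∏ j : Fin n, zf j w ^ a j * zbf j w ^ b j

/-- `R_m = ∏_j ζ_j^{m_j}`, with `ζ_j^{m_j} = z_j^{m_j}` for `m_j ≥ 0` and
`ζ_j^{m_j} = z̄_j^{−m_j}` for `m_j < 0`. -/
def Rm {n : ℕ} (m : Fin n → ℤ) (w : Phase n) : ℂ :=
  ∏ j : Fin n, if 0 ≤ m j then zf j w ^ (m j).toNat else zbf j w ^ (-(m j)).toNat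

/-- `w_i = z_i` if `ε_i = 1`, `w_i = z̄_i` if `ε_i = −1`. -/
def wfun {n : ℕ} (ε : Fin n → ℤ) (i : Fin n) (w : Phase n) : ℂ :=
  if ε i = 1 then zf i w else zbf i w

/-- `w̄_i`, the complex conjugate of `w_i`. -/
def wbfun {n : ℕ} (ε : Fin n → ℤ) (i : Fin n) (w : Phase n) : ℂ :=
  if ε i = 1 then zbf i w else zf i w

/-- `P_{ij} = i(w_i w̄_j − w_j w̄_i)` (complex-valued; its values are real). -/
def Pf {n : ℕ} (ε : Fin n → ℤ) (i j : Fin n) (w : Phase n) : ℂ :=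
  Complex.I * (wfun ε i w * wbfun ε j w - wfun ε j w * wbfun ε i w)

/-- `P_{ij}` as a real-valued function. -/
def PfR {n : ℕ} (ε : Fin n → ℤ) (i j : Fin n) (w : Phase n) : ℝ :=
  (Pf ε i j w).re


/-- `K_h = ∑_{p_{h-1} < i ≤ p_h} ε_i I_i` (complex-valued). Here the partition of
`{1,…,n}` (0-indexed: `{0,…,n-1}`) into `u` groups is given by the boundaries `pf`. -/
def Kc {n u : ℕ} (ε : Fin n → ℤ) (pf : Fin (u + 1) → ℕ) (h : Fin u) (w : Phase n) : ℂ :=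
  ∑ i : Fin n,
    if pf h.castSucc ≤ (i : ℕ) ∧ (i : ℕ) < pf h.succ then (ε i : ℂ) * Iact i w else 0

/-- `K_h` as a real-valued function. -/
def KR {n u : ℕ} (ε : Fin n → ℤ) (pf : Fin (u + 1) → ℕ) (h : Fin u) (w : Phase n) : ℝ :=
  ∑ i : Fin n,
    if pf h.castSucc ≤ (i : ℕ) ∧ (i : ℕ) < pf h.succ then (ε i : ℝ) * IR i w else 0

/-- `W_h = ∑_{p_{h-1} < i ≤ p_h} ε_i w_i²`. -/
def Wc {n u : ℕ} (ε : Fin n → ℤ) (pf : Fin (u + 1) → ℕ) (h : Fin u) (w : Phase n) : ℂ :=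
  ∑ i : Fin n,
    if pf h.castSucc ≤ (i : ℕ) ∧ (i : ℕ) < pf h.succ then (ε i : ℂ) * wfun ε i w ^ 2 else 0

/-- `W̄_h`, the complex conjugate of `W_h`. -/
def Wbc {n u : ℕ} (ε : Fin n → ℤ) (pf : Fin (u + 1) → ℕ) (h : Fin u) (w : Phase n) : ℂ :=
  ∑ i : Fin n,
    if pf h.castSucc ≤ (i : ℕ) ∧ (i : ℕ) < pf h.succ then (ε i : ℂ) * wbfun ε i w ^ 2 else 0

/-- `P_{(h)}² = ∑_{p_{h-1} < i < j ≤ p_h} ε_i ε_j P_{ij}²`. -/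
def Psqg {n u : ℕ} (ε : Fin n → ℤ) (pf : Fin (u + 1) → ℕ) (h : Fin u) (w : Phase n) : ℂ :=
  ∑ i : Fin n, ∑ j : Fin n,
    if pf h.castSucc ≤ (i : ℕ) ∧ i < j ∧ (j : ℕ) < pf h.succ then
      ((ε i * ε j : ℤ) : ℂ) * Pf ε i j w ^ 2
    else 0

/-- `R_m = ∏_h Ω_h^{m_h}`, with `Ω_h^{m_h} = W_h^{m_h}` for `m_h ≥ 0` and
`Ω_h^{m_h} = W̄_h^{−m_h}` for `m_h < 0`. -/
def RWc {n u : ℕ} (ε : Fin n → ℤ) (pf : Fin (u + 1) → ℕ) (m : Fin u → ℤ) (w : Phase n) : ℂ :=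
  ∏ h : Fin u,
    if 0 ≤ m h then Wc ε pf h w ^ (m h).toNat else Wbc ε pf h w ^ (-(m h)).toNat


/-- A real function on phase space which is a polynomial of degree at most 2 in the
momenta `P_{ij}` of the `h`-th group, i.e. with `p_{h-1} < i < j ≤ p_h`. -/
def IsPolyInGrpMomenta {n u : ℕ} (ε : Fin n → ℤ) (pf : Fin (u + 1) → ℕ) (h : Fin u)
    (f : Phase n → ℝ) : Prop :=
  ∃ Q : MvPolynomial {ij : Fin n × Fin n //
      pf h.castSucc ≤ (ij.1 : ℕ) ∧ ij.1 < ij.2 ∧ (ij.2 : ℕ) < pf h.succ} ℝ,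
    Q.totalDegree ≤ 2 ∧
    f = fun w => MvPolynomial.eval (fun ij => PfR ε ij.1.1 ij.1.2 w) Q


namespace S10
variable {n : ℕ}

lemma sqrt2_sq : ((Real.sqrt 2 : ℝ) : ℂ) * ((Real.sqrt 2 : ℝ) : ℂ) = 2 := by
  have h : Real.sqrt 2 * Real.sqrt 2 = 2 := Real.mul_self_sqrt (by norm_num)
  exact_mod_cast h

/-- the derivative CLM of `(x,p) ↦ (x j + c * p j)/√2` -/
def gD (c : ℂ) (j : Fin n) : Phase n →L[ℝ] ℂ :=
  ((Real.sqrt 2)⁻¹ : ℝ) •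
    (Complex.ofRealCLM.comp ((ContinuousLinearMap.proj j).comp
        (ContinuousLinearMap.fst ℝ (Fin n → ℝ) (Fin n → ℝ))) +
      c • Complex.ofRealCLM.comp ((ContinuousLinearMap.proj j).comp
        (ContinuousLinearMap.snd ℝ (Fin n → ℝ) (Fin n → ℝ))))

lemma gD_apply (c : ℂ) (j : Fin n) (w : Phase n) :
    gD c j w = ((w.1 j : ℂ) + c * (w.2 j : ℂ)) / ((Real.sqrt 2 : ℝ) : ℂ) := by
  simp [gD, div_eq_inv_mul, Complex.real_smul, smul_eq_mul]
  push_cast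
  ring

lemma zf_eq_gD (j : Fin n) : zf (n := n) j = ⇑(gD I j) := by
  funext w; rw [gD_apply]; rfl

lemma zbf_eq_gD (j : Fin n) : zbf (n := n) j = ⇑(gD (-I) j) := by
  funext w; rw [gD_apply]; simp [zbf]; ring_nf

lemma fderiv_zf (j : Fin n) (w : Phase n) : fderiv ℝ (zf j) w = gD I j := by
  rw [zf_eq_gD]; exact (gD I j).fderiv

lemma fderiv_zbf (j : Fin n) (w : Phase n) : fderiv ℝ (zbf j) w = gD (-I) j := by
  rw [zbf_eq_gD]; exact (gD (-I) j).fderiv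

lemma diff_zf (j : Fin n) : Differentiable ℝ (zf (n := n) j) := by
  rw [zf_eq_gD]; exact (gD I j).differentiable

lemma diff_zbf (j : Fin n) : Differentiable ℝ (zbf (n := n) j) := by
  rw [zbf_eq_gD]; exact (gD (-I) j).differentiable

lemma gD_x (c : ℂ) (j k : Fin n) :
    gD c j (Pi.single k (1:ℝ), (0 : Fin n → ℝ)) =
      (((Real.sqrt 2 : ℝ) : ℂ))⁻¹ * (if j = k then 1 else 0) := by
  simp [gD, Complex.real_smul, Pi.single_apply, smul_eq_mul]
  split_ifs <;> push_cast <;> ring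

lemma gD_p (c : ℂ) (j k : Fin n) :
    gD c j ((0 : Fin n → ℝ), Pi.single k (1:ℝ)) =
      (((Real.sqrt 2 : ℝ) : ℂ))⁻¹ * (c * (if j = k then 1 else 0)) := by
  simp [gD, Complex.real_smul, Pi.single_apply, smul_eq_mul]
  split_ifs <;> push_cast <;> ring

lemma pb_gen (c d : ℂ) (a b : Fin n) :
    pb (⇑(gD c a)) (⇑(gD d b)) = fun _ => if a = b then (c - d) / 2 else 0 := by
  funext w
  have h1 : ∀ k : Fin n, (fderiv ℝ (⇑(gD c a)) w ((0 : Fin n → ℝ), Pi.single k (1:ℝ)) *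
        fderiv ℝ (⇑(gD d b)) w (Pi.single k (1:ℝ), (0 : Fin n → ℝ)) -
      fderiv ℝ (⇑(gD c a)) w (Pi.single k (1:ℝ), (0 : Fin n → ℝ)) *
        fderiv ℝ (⇑(gD d b)) w ((0 : Fin n → ℝ), Pi.single k (1:ℝ))) =
      if a = k then (if b = k then
        ((((Real.sqrt 2:ℝ):ℂ))⁻¹ * (((Real.sqrt 2:ℝ):ℂ))⁻¹) * (c - d) else 0) else 0 := by
    intro k
    rw [(gD c a).fderiv, (gD d b).fderiv, gD_x, gD_p, gD_x, gD_p]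
    by_cases hak : a = k <;> by_cases hbk : b = k <;> simp [hak, hbk] <;> ring
  rw [pb]
  simp only [h1]
  rw [Finset.sum_ite_eq]
  have h2 : (((Real.sqrt 2:ℝ):ℂ))⁻¹ * (((Real.sqrt 2:ℝ):ℂ))⁻¹ = 2⁻¹ := by
    rw [← mul_inv, sqrt2_sq]
  simp only [Finset.mem_univ, if_true, h2]
  by_cases hab : a = b
  · subst hab; simp; ring
  · rw [if_neg (fun h => hab h.symm), if_neg hab]

lemma pb_zf_zbf (a b : Fin n) :
    pb (zf a) (zbf b) = fun _ => if a = b then I else 0 := by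
  rw [zf_eq_gD, zbf_eq_gD, pb_gen]
  funext w
  split_ifs <;> simp <;> ring

lemma pb_zf_zf (a b : Fin n) : pb (zf a) (zf b) = fun _ => 0 := by
  rw [zf_eq_gD, zf_eq_gD, pb_gen]; funext w; split_ifs <;> simp

lemma pb_zbf_zbf (a b : Fin n) : pb (zbf a) (zbf b) = fun _ => 0 := by
  rw [zbf_eq_gD, zbf_eq_gD, pb_gen]; funext w; split_ifs <;> simp

lemma pb_zbf_zf (a b : Fin n) :
    pb (zbf a) (zf b) = fun _ => if a = b then -I else 0 := by
  rw [zf_eq_gD, zbf_eq_gD, pb_gen]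
  funext w
  split_ifs <;> ring_nf


variable {n : ℕ}

lemma pb_swap (f g : Phase n → ℂ) : pb f g = fun w => -(pb g f w) := by
  funext w
  simp only [pb, ← Finset.sum_neg_distrib]
  exact Finset.sum_congr rfl fun _ _ => by ring

lemma pbR_swap (f g : Phase n → ℝ) : pbR f g = fun w => -(pbR g f w) := by
  funext w
  simp only [pbR, ← Finset.sum_neg_distrib]
  exact Finset.sum_congr rfl fun _ _ => by ring

lemma pb_const (f : Phase n → ℂ) (c : ℂ) : pb f (fun _ => c) = fun _ => 0 := by
  funext w
  simp [pb, fderiv_const]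

lemma pb_add (f g h : Phase n → ℂ) (hg : Differentiable ℝ g) (hh : Differentiable ℝ h) :
    pb f (fun w => g w + h w) = fun w => pb f g w + pb f h w := by
  funext w
  have : fderiv ℝ (fun w => g w + h w) w = fderiv ℝ g w + fderiv ℝ h w :=
    fderiv_add (hg w) (hh w)
  simp only [pb, this, ContinuousLinearMap.add_apply, ← Finset.sum_add_distrib]
  exact Finset.sum_congr rfl fun _ _ => by ring

lemma pb_sub (f g h : Phase n → ℂ) (hg : Differentiable ℝ g) (hh : Differentiable ℝ h) :
    pb f (fun w => g w - h w) = fun w => pb f g w - pb f h w := by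
  funext w
  have : fderiv ℝ (fun w => g w - h w) w = fderiv ℝ g w - fderiv ℝ h w :=
    fderiv_sub (hg w) (hh w)
  simp only [pb, this, ContinuousLinearMap.sub_apply, ← Finset.sum_sub_distrib]
  exact Finset.sum_congr rfl fun _ _ => by ring

lemma pb_smul (f g : Phase n → ℂ) (c : ℂ) (hg : Differentiable ℝ g) :
    pb f (fun w => c * g w) = fun w => c * pb f g w := by
  funext w
  have : fderiv ℝ (fun w => c * g w) w = c • fderiv ℝ g w := by
    have := fderiv_fun_const_smul (𝕜 := ℝ) (R := ℂ) (f := g) (hg w) c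
    simpa [smul_eq_mul] using this
  simp only [pb, this, ContinuousLinearMap.smul_apply, smul_eq_mul, Finset.mul_sum]
  exact Finset.sum_congr rfl fun _ _ => by ring

lemma pb_smul_left (f g : Phase n → ℂ) (c : ℂ) (hf : Differentiable ℝ f) :
    pb (fun w => c * f w) g = fun w => c * pb f g w := by
  rw [pb_swap, pb_smul _ _ _ hf, pb_swap f g]
  funext w; ring

lemma pb_mul (f g h : Phase n → ℂ) (hg : Differentiable ℝ g) (hh : Differentiable ℝ h) :
    pb f (fun w => g w * h w) = fun w => g w * pb f h w + h w * pb f g w := by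
  funext w
  have : fderiv ℝ (fun w => g w * h w) w = g w • fderiv ℝ h w + h w • fderiv ℝ g w :=
    fderiv_mul (hg w) (hh w)
  simp only [pb, this, ContinuousLinearMap.add_apply, ContinuousLinearMap.smul_apply,
    smul_eq_mul, Finset.mul_sum, ← Finset.sum_add_distrib]
  exact Finset.sum_congr rfl fun _ _ => by ring

lemma pb_sum {ι : Type*} (f : Phase n → ℂ) (s : Finset ι) (g : ι → Phase n → ℂ)
    (hg : ∀ i ∈ s, Differentiable ℝ (g i)) :
    pb f (fun w => ∑ i ∈ s, g i w) = fun w => ∑ i ∈ s, pb f (g i) w := by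
  classical
  induction s using Finset.induction_on with
  | empty => simpa using pb_const f 0
  | insert a s' hx ih =>
    have h1 : Differentiable ℝ (fun w => ∑ i ∈ s', g i w) :=
      Differentiable.fun_sum fun i hi => hg i (Finset.mem_insert_of_mem hi)
    have h2 := pb_add f (g a) (fun w => ∑ i ∈ s', g i w)
      (hg a (Finset.mem_insert_self a s')) h1
    funext w
    rw [show (fun w => ∑ i ∈ insert a s', g i w) = fun w => g a w + ∑ i ∈ s', g i w by
      funext w; rw [Finset.sum_insert hx]]
    rw [h2, ih fun i hi => hg i (Finset.mem_insert_of_mem hi), Finset.sum_insert hx]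

lemma pb_sum_left {ι : Type*} (f : Phase n → ℂ) (s : Finset ι) (g : ι → Phase n → ℂ)
    (hg : ∀ i ∈ s, Differentiable ℝ (g i)) :
    pb (fun w => ∑ i ∈ s, g i w) f = fun w => ∑ i ∈ s, pb (g i) f w := by
  rw [pb_swap, pb_sum f s g hg]
  funext w
  rw [← Finset.sum_neg_distrib]
  exact Finset.sum_congr rfl fun i _ => by rw [pb_swap (g i) f]

lemma pb_pow_succ (f g : Phase n → ℂ) (k : ℕ) (hg : Differentiable ℝ g) :
    pb f (fun w => g w ^ (k + 1)) = fun w => (k + 1 : ℂ) * g w ^ k * pb f g w := by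
  induction k with
  | zero => simpa using (by funext w; rw [pow_one] : (fun w => g w ^ 1) = g) ▸ rfl
  | succ k ih =>
    have hgk : Differentiable ℝ (fun w => g w ^ (k + 1)) := hg.pow _
    have : (fun w => g w ^ (k + 1 + 1)) = fun w => g w ^ (k+1) * g w := by
      funext w; rw [pow_succ]
    rw [this, pb_mul f _ g hgk hg, ih]
    funext w
    push_cast
    ring

/-- eigenfunction lemma for powers -/
lemma pb_pow_eig (f g : Phase n → ℂ) (k : ℕ) (c : ℂ) (hg : Differentiable ℝ g)
    (h : pb f g = fun w => c * g w) :
    pb f (fun w => g w ^ k) = fun w => ((k : ℂ) * c) * g w ^ k := by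
  cases k with
  | zero => simpa using pb_const f 1
  | succ k =>
    rw [pb_pow_succ f g k hg, h]
    funext w
    push_cast
    ring

lemma diff_prod {ι : Type*} (s : Finset ι) (G : ι → Phase n → ℂ)
    (hG : ∀ i ∈ s, Differentiable ℝ (G i)) :
    Differentiable ℝ (fun w => ∏ i ∈ s, G i w) := by
  classical
  induction s using Finset.induction_on with
  | empty => simpa using differentiable_const (1 : ℂ)
  | insert a s' hx ih =>
    have h2 := (hG a (Finset.mem_insert_self a s')).fun_mul
      (ih fun i hi => hG i (Finset.mem_insert_of_mem hi))
    exact (by funext w; rw [Finset.prod_insert hx] :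
      (fun w => ∏ i ∈ insert a s', G i w) = _) ▸ h2

/-- eigenfunction lemma for products -/
lemma pb_prod_eig {ι : Type*} (f : Phase n → ℂ) (s : Finset ι) (G : ι → Phase n → ℂ)
    (c : ι → ℂ) (hG : ∀ i ∈ s, Differentiable ℝ (G i))
    (h : ∀ i ∈ s, pb f (G i) = fun w => c i * G i w) :
    pb f (fun w => ∏ i ∈ s, G i w) = fun w => (∑ i ∈ s, c i) * ∏ i ∈ s, G i w := by
  classical
  induction s using Finset.induction_on with
  | empty => simpa using pb_const f 1
  | insert a s' hx ih =>
    have h1 : Differentiable ℝ (fun w => ∏ i ∈ s', G i w) :=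
      diff_prod s' G (fun i hi => hG i (Finset.mem_insert_of_mem hi))
    rw [show (fun w => ∏ i ∈ insert a s', G i w) = fun w => G a w * ∏ i ∈ s', G i w by
      funext w; rw [Finset.prod_insert hx]]
    rw [pb_mul f _ _ (hG a (Finset.mem_insert_self a s')) h1,
      ih (fun i hi => hG i (Finset.mem_insert_of_mem hi))
        (fun i hi => h i (Finset.mem_insert_of_mem hi)),
      h a (Finset.mem_insert_self a s')]
    funext w
    rw [Finset.sum_insert hx, Finset.prod_insert hx]
    ring


variable {n : ℕ}

/-- complexification of a real-valued function -/
def oR (f : Phase n → ℝ) : Phase n → ℂ := fun w => ((f w : ℝ) : ℂ)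

lemma fderiv_oR (f : Phase n → ℝ) (w : Phase n) :
    fderiv ℝ (oR f) w = Complex.ofRealCLM.comp (fderiv ℝ f w) := by
  by_cases hf : DifferentiableAt ℝ f w
  · exact (Complex.ofRealCLM.hasFDerivAt.comp w hf.hasFDerivAt).fderiv
  · have h2 : ¬ DifferentiableAt ℝ (oR f) w := by
      intro h
      have : DifferentiableAt ℝ (fun w => Complex.reCLM (oR f w)) w :=
        Complex.reCLM.differentiableAt.comp w h
      exact hf (by simpa [oR] using this)
    rw [fderiv_zero_of_not_differentiableAt hf, fderiv_zero_of_not_differentiableAt h2,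
      ContinuousLinearMap.comp_zero]

lemma pb_oR (f g : Phase n → ℝ) : pb (oR f) (oR g) = oR (pbR f g) := by
  funext w
  simp only [pb, pbR, oR, fderiv_oR, ContinuousLinearMap.coe_comp', Function.comp_apply,
    Complex.ofRealCLM_apply]
  push_cast
  rfl

lemma pbR_eq_zero (f g : Phase n → ℝ) (h : pb (oR f) (oR g) = fun _ => 0) :
    pbR f g = fun _ => 0 := by
  funext w
  have h2 := congrFun ((pb_oR f g).symm.trans h) w
  simpa [oR] using h2

lemma fderiv_conj (f : Phase n → ℂ) (w : Phase n) :
    fderiv ℝ (fun w => (starRingEnd ℂ) (f w)) w =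
      (Complex.conjCLE : ℂ ≃L[ℝ] ℂ).toContinuousLinearMap.comp (fderiv ℝ f w) := by
  have : (fun w => (starRingEnd ℂ) (f w)) = ⇑(Complex.conjCLE) ∘ f := by
    funext w; simp
  rw [this, ContinuousLinearEquiv.comp_fderiv]

lemma pb_conj (f g : Phase n → ℂ) :
    pb (fun w => (starRingEnd ℂ) (f w)) (fun w => (starRingEnd ℂ) (g w)) =
      fun w => (starRingEnd ℂ) (pb f g w) := by
  funext w
  simp only [pb, fderiv_conj, ContinuousLinearMap.coe_comp', Function.comp_apply,
    ContinuousLinearEquiv.coe_coe, Complex.conjCLE_apply, map_sum, map_sub, map_mul]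

lemma diff_oR (f : Phase n → ℝ) (hf : Differentiable ℝ f) : Differentiable ℝ (oR f) :=
  fun w => Complex.ofRealCLM.differentiableAt.comp w (hf w)

lemma diff_conj (f : Phase n → ℂ) (hf : Differentiable ℝ f) :
    Differentiable ℝ (fun w => (starRingEnd ℂ) (f w)) :=
  fun w => (Complex.conjCLE.differentiable.differentiableAt).comp w (hf w)

/-- key: bracket of a real function with the imaginary part of a complex function,
assuming the bracket with the function itself and its conjugate vanish -/
lemma pbR_im (f : Phase n → ℝ) (G : Phase n → ℂ) (hG : Differentiable ℝ G)
    (h1 : pb (oR f) G = fun _ => 0)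
    (h2 : pb (oR f) (fun w => (starRingEnd ℂ) (G w)) = fun _ => 0) :
    pbR f (fun w => (G w).im) = fun _ => 0 := by
  apply pbR_eq_zero
  have him : oR (fun w => (G w).im) = fun w => (G w - (starRingEnd ℂ) (G w)) * (-I/2) := by
    funext w
    rw [oR]
    rw [Complex.sub_conj]
    push_cast
    linear_combination ((G w).im : ℂ) * Complex.I_sq
  rw [him]
  have hsub : Differentiable ℝ (fun w => G w - (starRingEnd ℂ) (G w)) :=
    hG.sub (diff_conj G hG)
  have := pb_mul (oR f) (fun w => G w - (starRingEnd ℂ) (G w)) (fun _ => (-I/2))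
    hsub (differentiable_const _)
  rw [show (fun w => (G w - (starRingEnd ℂ) (G w)) * (-I/2)) =
      (fun w => (G w - (starRingEnd ℂ) (G w)) * (fun (_ : Phase n) => (-I/2 : ℂ)) w) from rfl,
    this, pb_const, pb_sub (oR f) G _ hG (diff_conj G hG), h1, h2]
  funext w
  simp


/-! ### w-level brackets -/

section WLevel
variable {n : ℕ} (ε : Fin n → ℤ)

lemma diff_wfun (i : Fin n) : Differentiable ℝ (wfun ε i) := by
  unfold wfun; split_ifs
  · exact diff_zf i
  · exact diff_zbf i

lemma diff_wbfun (i : Fin n) : Differentiable ℝ (wbfun ε i) := by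
  unfold wbfun; split_ifs
  · exact diff_zbf i
  · exact diff_zf i

lemma diff_Iact (i : Fin n) : Differentiable ℝ (Iact (n := n) i) :=
  (diff_zf i).mul (diff_zbf i)

lemma Iact_eq (i : Fin n) : Iact i = fun w => wfun ε i w * wbfun ε i w := by
  funext w
  unfold Iact wfun wbfun
  split_ifs
  · rfl
  · exact mul_comm (zf i w) (zbf i w)

/-- the basic two-by-two product rule -/
lemma pb_mul₂ (f1 f2 g1 g2 : Phase n → ℂ) (h1 : Differentiable ℝ f1)
    (h2 : Differentiable ℝ f2) (h3 : Differentiable ℝ g1) (h4 : Differentiable ℝ g2) :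
    pb (fun w => f1 w * f2 w) (fun w => g1 w * g2 w) = fun w =>
      f1 w * g1 w * pb f2 g2 w + f1 w * g2 w * pb f2 g1 w +
      f2 w * g1 w * pb f1 g2 w + f2 w * g2 w * pb f1 g1 w := by
  rw [pb_mul _ g1 g2 h3 h4]
  have e1 : pb (fun w => f1 w * f2 w) g1 = fun w => f1 w * pb f2 g1 w + f2 w * pb f1 g1 w := by
    rw [pb_swap, pb_mul g1 f1 f2 h1 h2]
    funext w
    rw [pb_swap f2 g1, pb_swap f1 g1]
    simp only [Pi.neg_apply, neg_neg]
    ring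
  have e2 : pb (fun w => f1 w * f2 w) g2 = fun w => f1 w * pb f2 g2 w + f2 w * pb f1 g2 w := by
    rw [pb_swap, pb_mul g2 f1 f2 h1 h2]
    funext w
    rw [pb_swap f2 g2, pb_swap f1 g2]
    simp only [Pi.neg_apply, neg_neg]
    ring
  funext w
  rw [e1, e2]
  ring

variable (hε : ∀ i, ε i = 1 ∨ ε i = -1)
include hε

lemma wfun_cases (a : Fin n) :
    (ε a = 1 ∧ wfun ε a = zf a ∧ wbfun ε a = zbf a) ∨
    (ε a = -1 ∧ wfun ε a = zbf a ∧ wbfun ε a = zf a) := by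
  rcases hε a with h | h
  · exact Or.inl ⟨h, by funext w; unfold wfun; rw [if_pos h],
      by funext w; unfold wbfun; rw [if_pos h]⟩
  · refine Or.inr ⟨h, ?_, ?_⟩
    · funext w; unfold wfun; rw [if_neg (by rw [h]; norm_num)]
    · funext w; unfold wbfun; rw [if_neg (by rw [h]; norm_num)]

lemma pb_w_wb (a b : Fin n) :
    pb (wfun ε a) (wbfun ε b) = fun _ => if a = b then (ε a : ℂ) * I else 0 := by
  rcases wfun_cases ε hε a with ⟨ha, ha1, ha2⟩ | ⟨ha, ha1, ha2⟩ <;>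
    rcases wfun_cases ε hε b with ⟨hb, hb1, hb2⟩ | ⟨hb, hb1, hb2⟩
  · rw [ha1, hb2, pb_zf_zbf]; funext w; split_ifs <;> norm_num [ha]
  · rw [ha1, hb2, pb_zf_zf]; funext w
    split_ifs with h
    · subst h; rw [ha] at hb; norm_num at hb
    · rfl
  · rw [ha1, hb2, pb_zbf_zbf]; funext w
    split_ifs with h
    · subst h; rw [ha] at hb; norm_num at hb
    · rfl
  · rw [ha1, hb2, pb_zbf_zf]; funext w; split_ifs <;> norm_num [ha]

lemma pb_w_w (a b : Fin n) : pb (wfun ε a) (wfun ε b) = fun _ => 0 := by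
  rcases wfun_cases ε hε a with ⟨ha, ha1, ha2⟩ | ⟨ha, ha1, ha2⟩ <;>
    rcases wfun_cases ε hε b with ⟨hb, hb1, hb2⟩ | ⟨hb, hb1, hb2⟩
  · rw [ha1, hb1, pb_zf_zf]
  · rw [ha1, hb1, pb_zf_zbf]; funext w
    split_ifs with h
    · subst h; rw [ha] at hb; norm_num at hb
    · rfl
  · rw [ha1, hb1, pb_zbf_zf]; funext w
    split_ifs with h
    · subst h; rw [ha] at hb; norm_num at hb
    · rfl
  · rw [ha1, hb1, pb_zbf_zbf]

lemma pb_wb_wb (a b : Fin n) : pb (wbfun ε a) (wbfun ε b) = fun _ => 0 := by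
  rcases wfun_cases ε hε a with ⟨ha, ha1, ha2⟩ | ⟨ha, ha1, ha2⟩ <;>
    rcases wfun_cases ε hε b with ⟨hb, hb1, hb2⟩ | ⟨hb, hb1, hb2⟩
  · rw [ha2, hb2, pb_zbf_zbf]
  · rw [ha2, hb2, pb_zbf_zf]; funext w
    split_ifs with h
    · subst h; rw [ha] at hb; norm_num at hb
    · rfl
  · rw [ha2, hb2, pb_zf_zbf]; funext w
    split_ifs with h
    · subst h; rw [ha] at hb; norm_num at hb
    · rfl
  · rw [ha2, hb2, pb_zf_zf]

lemma pb_wb_w (a b : Fin n) :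
    pb (wbfun ε a) (wfun ε b) = fun _ => if a = b then -((ε a : ℂ) * I) else 0 := by
  rw [pb_swap, pb_w_wb ε hε b a]
  funext w
  by_cases h : a = b
  · subst h; simp
  · have h' : ¬ b = a := fun hh => h hh.symm
    simp [h, h']

/-- {I_l, w_i w̄_j} = ε_l i (δ_{lj} − δ_{li}) w_i w̄_j -/
lemma pb_I_M (l i j : Fin n) :
    pb (Iact l) (fun w => wfun ε i w * wbfun ε j w) = fun w =>
      (ε l : ℂ) * I * ((if l = j then 1 else 0) - (if l = i then 1 else 0)) *
        (wfun ε i w * wbfun ε j w) := by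
  rw [Iact_eq ε, pb_mul₂ (wfun ε l) (wbfun ε l) (wfun ε i) (wbfun ε j)
    (diff_wfun ε l) (diff_wbfun ε l) (diff_wfun ε i) (diff_wbfun ε j),
    pb_wb_wb ε hε, pb_wb_w ε hε, pb_w_wb ε hε, pb_w_w ε hε]
  funext w
  split_ifs with h1 h2 h3
  all_goals try subst h1
  all_goals try subst h2
  all_goals try subst h3
  all_goals ring

/-- {I_l, I_i} = 0 -/
lemma pb_I_I (l i : Fin n) : pb (Iact l) (Iact i) = fun _ => 0 := by
  rw [show Iact (n := n) i = fun w => wfun ε i w * wbfun ε i w from Iact_eq ε i,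
    pb_I_M ε hε l i i]
  funext w
  ring

/-- {I_l, w_i²} = −2 ε_l i δ_{li} w_i² -/
lemma pb_I_W (l i : Fin n) :
    pb (Iact l) (fun w => wfun ε i w ^ 2) = fun w =>
      (if l = i then -(2 * (ε l : ℂ) * I) else 0) * wfun ε i w ^ 2 := by
  have hsq : (fun w => wfun ε i w ^ 2) = fun w => wfun ε i w * wfun ε i w := by
    funext w; ring
  rw [hsq, Iact_eq ε, pb_mul₂ (wfun ε l) (wbfun ε l) (wfun ε i) (wfun ε i)
    (diff_wfun ε l) (diff_wbfun ε l) (diff_wfun ε i) (diff_wfun ε i),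
    pb_wb_w ε hε, pb_w_w ε hε]
  funext w
  split_ifs with h1
  all_goals try subst h1
  all_goals ring

/-- {I_l, w̄_i²} = 2 ε_l i δ_{li} w̄_i² -/
lemma pb_I_Wb (l i : Fin n) :
    pb (Iact l) (fun w => wbfun ε i w ^ 2) = fun w =>
      (if l = i then 2 * (ε l : ℂ) * I else 0) * wbfun ε i w ^ 2 := by
  have hsq : (fun w => wbfun ε i w ^ 2) = fun w => wbfun ε i w * wbfun ε i w := by
    funext w; ring
  rw [hsq, Iact_eq ε, pb_mul₂ (wfun ε l) (wbfun ε l) (wbfun ε i) (wbfun ε i)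
    (diff_wfun ε l) (diff_wbfun ε l) (diff_wbfun ε i) (diff_wbfun ε i),
    pb_wb_wb ε hε, pb_w_wb ε hε]
  funext w
  split_ifs with h1
  all_goals try subst h1
  all_goals ring

/-- {w_i w̄_j, w_l²} = −2 ε_j i δ_{jl} w_i w_l -/
lemma pb_M_W (i j l : Fin n) :
    pb (fun w => wfun ε i w * wbfun ε j w) (fun w => wfun ε l w ^ 2) = fun w =>
      (if j = l then -(2 * (ε j : ℂ) * I) else 0) * (wfun ε i w * wfun ε l w) := by
  have hsq : (fun w => wfun ε l w ^ 2) = fun w => wfun ε l w * wfun ε l w := by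
    funext w; ring
  rw [hsq, pb_mul₂ (wfun ε i) (wbfun ε j) (wfun ε l) (wfun ε l)
    (diff_wfun ε i) (diff_wbfun ε j) (diff_wfun ε l) (diff_wfun ε l),
    pb_wb_w ε hε, pb_w_w ε hε]
  funext w
  split_ifs with h1
  all_goals try subst h1
  all_goals ring

/-- {w_i w̄_j, w̄_l²} = 2 ε_i i δ_{il} w̄_j w̄_l -/
lemma pb_M_Wb (i j l : Fin n) :
    pb (fun w => wfun ε i w * wbfun ε j w) (fun w => wbfun ε l w ^ 2) = fun w =>
      (if i = l then 2 * (ε i : ℂ) * I else 0) * (wbfun ε j w * wbfun ε l w) := by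
  have hsq : (fun w => wbfun ε l w ^ 2) = fun w => wbfun ε l w * wbfun ε l w := by
    funext w; ring
  rw [hsq, pb_mul₂ (wfun ε i) (wbfun ε j) (wbfun ε l) (wbfun ε l)
    (diff_wfun ε i) (diff_wbfun ε j) (diff_wbfun ε l) (diff_wbfun ε l),
    pb_wb_wb ε hε, pb_w_wb ε hε]
  funext w
  split_ifs with h1
  all_goals try subst h1
  all_goals ring

end WLevel

/-! ### group-level facts -/

section Groups
variable {n u : ℕ} (ε : Fin n → ℤ) (pf : Fin (u + 1) → ℕ)

/-- membership of index `i` in group `h` -/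
def cnd (h : Fin u) (i : Fin n) : Prop := pf h.castSucc ≤ (i : ℕ) ∧ (i : ℕ) < pf h.succ

instance (h : Fin u) (i : Fin n) : Decidable (cnd pf h i) := by
  unfold cnd; infer_instance

lemma cnd_unique (hpf : StrictMono pf) {h g : Fin u} {i : Fin n}
    (hh : cnd pf h i) (hg : cnd pf g i) : h = g := by
  by_contra hne
  rcases lt_or_gt_of_ne hne with hlt | hlt
  · have h1 : pf h.succ ≤ pf g.castSucc := hpf.monotone (by
      rw [Fin.le_def]
      simp only [Fin.val_succ, Fin.coe_castSucc]
      rw [Fin.lt_def] at hlt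
      omega)
    have h2 := hh.2
    have h3 := hg.1
    omega
  · have h1 : pf g.succ ≤ pf h.castSucc := hpf.monotone (by
      rw [Fin.le_def]
      simp only [Fin.val_succ, Fin.coe_castSucc]
      have := Fin.lt_def.mp hlt
      omega)
    have h2 := hg.2
    have h3 := hh.1
    omega

lemma pb_ite (f g : Phase n → ℂ) (P : Prop) [Decidable P] :
    pb f (fun w => if P then g w else 0) = fun w => if P then pb f g w else 0 := by
  by_cases h : P
  · simp only [if_pos h]
  · simp only [if_neg h]
    exact pb_const f 0

lemma diff_ite (g : Phase n → ℂ) (P : Prop) [Decidable P] (hg : Differentiable ℝ g) :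
    Differentiable ℝ (fun w => if P then g w else 0) := by
  by_cases h : P
  · simpa only [if_pos h] using hg
  · simpa only [if_neg h] using differentiable_const (0 : ℂ)

lemma pb_sub_left (f g h : Phase n → ℂ) (hf : Differentiable ℝ f) (hg : Differentiable ℝ g) :
    pb (fun w => f w - g w) h = fun w => pb f h w - pb g h w := by
  rw [pb_swap, pb_sub h f g hf hg]
  funext w
  rw [pb_swap f h, pb_swap g h]
  simp only [Pi.neg_apply]
  ring

lemma Kc_eq (h : Fin u) : Kc ε pf h =
    fun w => ∑ i : Fin n, if cnd pf h i then (ε i : ℂ) * Iact i w else 0 := rfl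

lemma Wc_eq (h : Fin u) : Wc ε pf h =
    fun w => ∑ i : Fin n, if cnd pf h i then (ε i : ℂ) * wfun ε i w ^ 2 else 0 := rfl

lemma Wbc_eq (h : Fin u) : Wbc ε pf h =
    fun w => ∑ i : Fin n, if cnd pf h i then (ε i : ℂ) * wbfun ε i w ^ 2 else 0 := rfl

lemma diff_Kc (h : Fin u) : Differentiable ℝ (Kc ε pf h) := by
  rw [Kc_eq]
  exact Differentiable.fun_sum fun i _ => diff_ite _ _ ((differentiable_const _).mul (diff_Iact i))

lemma diff_Wc (h : Fin u) : Differentiable ℝ (Wc ε pf h) := by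
  rw [Wc_eq]
  exact Differentiable.fun_sum fun i _ =>
    diff_ite _ _ ((differentiable_const _).mul ((diff_wfun ε i).pow 2))

lemma diff_Wbc (h : Fin u) : Differentiable ℝ (Wbc ε pf h) := by
  rw [Wbc_eq]
  exact Differentiable.fun_sum fun i _ =>
    diff_ite _ _ ((differentiable_const _).mul ((diff_wbfun ε i).pow 2))

lemma diff_Pf (i j : Fin n) : Differentiable ℝ (Pf ε i j) := by
  unfold Pf
  exact (differentiable_const I).mul
    (((diff_wfun ε i).mul (diff_wbfun ε j)).sub ((diff_wfun ε j).mul (diff_wbfun ε i)))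

lemma diff_RWc (m : Fin u → ℤ) : Differentiable ℝ (RWc ε pf m) := by
  unfold RWc
  apply diff_prod
  intro h _
  by_cases hm : 0 ≤ m h
  · simpa only [if_pos hm] using (diff_Wc ε pf h).fun_pow _
  · simpa only [if_neg hm] using (diff_Wbc ε pf h).fun_pow _

/-- expand the bracket with `K_h` on the left -/
lemma pb_K_left (h : Fin u) (f : Phase n → ℂ) :
    pb (Kc ε pf h) f =
      fun w => ∑ l : Fin n, if cnd pf h l then (ε l : ℂ) * pb (Iact l) f w else 0 := by
  rw [Kc_eq, pb_sum_left f Finset.univ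
    (fun i => fun w => if cnd pf h i then (ε i : ℂ) * Iact i w else 0)
    (fun i _ => diff_ite _ _ ((differentiable_const _).mul (diff_Iact i)))]
  funext w
  refine Finset.sum_congr rfl fun l _ => ?_
  by_cases hc : cnd pf h l
  · simp only [if_pos hc]
    rw [pb_smul_left _ _ _ (diff_Iact l)]
  · simp only [if_neg hc]
    rw [pb_swap]
    simp [pb_const]

variable (hε : ∀ i, ε i = 1 ∨ ε i = -1)
include hε

lemma eps_sq (i : Fin n) : ((ε i : ℂ)) * ((ε i : ℂ)) = 1 := by
  rcases hε i with h | h <;> rw [h] <;> norm_num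

/-- {I_l, K_h} = 0 -/
lemma pb_I_K (l : Fin n) (h : Fin u) : pb (Iact l) (Kc ε pf h) = fun _ => 0 := by
  rw [Kc_eq, pb_sum (Iact l) Finset.univ _
    (fun i _ => diff_ite _ _ ((differentiable_const _).fun_mul (diff_Iact i)))]
  funext w
  refine Finset.sum_eq_zero fun i _ => ?_
  rw [pb_ite, pb_smul _ _ _ (diff_Iact i), pb_I_I ε hε l i]
  simp

/-- {K_h, K_h'} = 0 -/
lemma pb_K_K (h h' : Fin u) : pb (Kc ε pf h) (Kc ε pf h') = fun _ => 0 := by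
  rw [pb_K_left]
  funext w
  refine Finset.sum_eq_zero fun l _ => ?_
  rw [pb_I_K ε pf hε l h']
  simp

/-- {I_l, W_h} = −2i [l ∈ h] w_l² -/
lemma pb_I_Wc (l : Fin n) (h : Fin u) :
    pb (Iact l) (Wc ε pf h) =
      fun w => if cnd pf h l then -(2*I) * wfun ε l w ^ 2 else 0 := by
  rw [Wc_eq, pb_sum (Iact l) Finset.univ _
    (fun i _ => diff_ite _ _ ((differentiable_const _).fun_mul ((diff_wfun ε i).fun_pow 2)))]
  funext w
  have e1 : ∀ i : Fin n,
      (if cnd pf h i then pb (Iact l) (fun w => (ε i : ℂ) * wfun ε i w ^ 2) w else 0) =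
      if l = i then (if cnd pf h i then -(2*I) * wfun ε i w ^ 2 else 0) else 0 := by
    intro i
    rw [pb_smul _ _ _ ((diff_wfun ε i).fun_pow 2), pb_I_W ε hε l i]
    by_cases hli : l = i <;> by_cases hc : cnd pf h i <;>
      simp only [hli, hc, eq_self_iff_true, ite_true, ite_false, not_false_iff,
        zero_mul, mul_zero]
    linear_combination (-(2*I) * wfun ε i w ^ 2) * (eps_sq ε hε i)
  simp only [pb_ite]
  calc (∑ i : Fin n, if cnd pf h i then
          pb (Iact l) (fun w => (ε i : ℂ) * wfun ε i w ^ 2) w else 0)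
      = ∑ i : Fin n, if l = i then
          (if cnd pf h i then -(2*I) * wfun ε i w ^ 2 else 0) else 0 :=
        Finset.sum_congr rfl fun i _ => e1 i
    _ = _ := by rw [Finset.sum_ite_eq]; simp

/-- {I_l, W̄_h} = 2i [l ∈ h] w̄_l² -/
lemma pb_I_Wbc (l : Fin n) (h : Fin u) :
    pb (Iact l) (Wbc ε pf h) =
      fun w => if cnd pf h l then (2*I) * wbfun ε l w ^ 2 else 0 := by
  rw [Wbc_eq, pb_sum (Iact l) Finset.univ _
    (fun i _ => diff_ite _ _ ((differentiable_const _).fun_mul ((diff_wbfun ε i).fun_pow 2)))]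
  funext w
  have e1 : ∀ i : Fin n,
      (if cnd pf h i then pb (Iact l) (fun w => (ε i : ℂ) * wbfun ε i w ^ 2) w else 0) =
      if l = i then (if cnd pf h i then (2*I) * wbfun ε i w ^ 2 else 0) else 0 := by
    intro i
    rw [pb_smul _ _ _ ((diff_wbfun ε i).fun_pow 2), pb_I_Wb ε hε l i]
    by_cases hli : l = i <;> by_cases hc : cnd pf h i <;>
      simp only [hli, hc, eq_self_iff_true, ite_true, ite_false, not_false_iff,
        zero_mul, mul_zero]
    linear_combination ((2*I) * wbfun ε i w ^ 2) * (eps_sq ε hε i)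
  simp only [pb_ite]
  calc (∑ i : Fin n, if cnd pf h i then
          pb (Iact l) (fun w => (ε i : ℂ) * wbfun ε i w ^ 2) w else 0)
      = ∑ i : Fin n, if l = i then
          (if cnd pf h i then (2*I) * wbfun ε i w ^ 2 else 0) else 0 :=
        Finset.sum_congr rfl fun i _ => e1 i
    _ = _ := by rw [Finset.sum_ite_eq]; simp

/-- {K_h, W_h'} = −2i δ_hh' W_h' -/
lemma pb_K_Wc (hpf : StrictMono pf) (h h' : Fin u) :
    pb (Kc ε pf h) (Wc ε pf h') =
      fun w => (if h = h' then -(2*I) else 0) * Wc ε pf h' w := by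
  rw [pb_K_left]
  funext w
  simp only [pb_I_Wc ε pf hε _ h']
  by_cases hhh : h = h'
  · subst hhh
    rw [if_pos rfl, Wc_eq, Finset.mul_sum]
    refine Finset.sum_congr rfl fun l _ => ?_
    by_cases hc : cnd pf h l <;> simp only [hc, ite_true, ite_false, if_pos, if_neg,
      not_false_iff, mul_zero] <;> ring
  · rw [if_neg hhh, zero_mul]
    refine Finset.sum_eq_zero fun l _ => ?_
    by_cases hc : cnd pf h l
    · rw [if_pos hc]
      have hc' : ¬ cnd pf h' l := fun hc' => hhh (cnd_unique pf hpf hc hc')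
      rw [if_neg hc', mul_zero]
    · rw [if_neg hc]

/-- {K_h, W̄_h'} = 2i δ_hh' W̄_h' -/
lemma pb_K_Wbc (hpf : StrictMono pf) (h h' : Fin u) :
    pb (Kc ε pf h) (Wbc ε pf h') =
      fun w => (if h = h' then (2*I) else 0) * Wbc ε pf h' w := by
  rw [pb_K_left]
  funext w
  simp only [pb_I_Wbc ε pf hε _ h']
  by_cases hhh : h = h'
  · subst hhh
    rw [if_pos rfl, Wbc_eq, Finset.mul_sum]
    refine Finset.sum_congr rfl fun l _ => ?_
    by_cases hc : cnd pf h l <;> simp only [hc, ite_true, ite_false, if_pos, if_neg,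
      not_false_iff, mul_zero] <;> ring
  · rw [if_neg hhh, zero_mul]
    refine Finset.sum_eq_zero fun l _ => ?_
    by_cases hc : cnd pf h l
    · rw [if_pos hc]
      have hc' : ¬ cnd pf h' l := fun hc' => hhh (cnd_unique pf hpf hc hc')
      rw [if_neg hc', mul_zero]
    · rw [if_neg hc]

end Groups

/-! ### Pf-level and J-level facts -/

section PfJ
variable {n u : ℕ} (ε : Fin n → ℤ) (pf : Fin (u + 1) → ℕ)
  (hε : ∀ i, ε i = 1 ∨ ε i = -1)
include hε

/-- {I_l, P_ij} = −ε_l (δ_lj − δ_li)(w_i w̄_j + w_j w̄_i) -/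
lemma pb_I_Pf (l i j : Fin n) :
    pb (Iact l) (Pf ε i j) = fun w =>
      -(ε l : ℂ) * ((if l = j then 1 else 0) - (if l = i then 1 else 0)) *
        (wfun ε i w * wbfun ε j w + wfun ε j w * wbfun ε i w) := by
  have hPf : Pf ε i j = fun w =>
      I * ((fun w => wfun ε i w * wbfun ε j w) w - (fun w => wfun ε j w * wbfun ε i w) w) := rfl
  rw [hPf, pb_smul _ _ _ (((diff_wfun ε i).fun_mul (diff_wbfun ε j)).fun_sub
      ((diff_wfun ε j).fun_mul (diff_wbfun ε i))),
    pb_sub _ _ _ ((diff_wfun ε i).fun_mul (diff_wbfun ε j)) ((diff_wfun ε j).fun_mul (diff_wbfun ε i)),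
    pb_I_M ε hε l i j, pb_I_M ε hε l j i]
  funext w
  linear_combination ((ε l : ℂ) * ((if l = j then (1:ℂ) else 0) - (if l = i then 1 else 0)) *
    (wfun ε i w * wbfun ε j w + wfun ε j w * wbfun ε i w)) * Complex.I_sq

/-- {K_h, P_ij} = 0 when i and j belong to one group -/
lemma pb_K_Pf (hpf : StrictMono pf) (h : Fin u) {g : Fin u} {i j : Fin n} (hij : i ≠ j)
    (hi : cnd pf g i) (hj : cnd pf g j) :
    pb (Kc ε pf h) (Pf ε i j) = fun _ => 0 := by
  rw [pb_K_left]
  funext w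
  set X := wfun ε i w * wbfun ε j w + wfun ε j w * wbfun ε i w with hX
  have e1 : ∀ l : Fin n,
      (if cnd pf h l then (ε l : ℂ) * pb (Iact l) (Pf ε i j) w else 0) =
      (if i = l then (if cnd pf h l then X else 0) else 0) +
      (if j = l then (if cnd pf h l then -X else 0) else 0) := by
    intro l
    rw [pb_I_Pf ε hε l i j]
    by_cases hli : l = i <;> by_cases hlj : l = j
    · exact absurd (hli.symm.trans hlj) hij
    · rw [if_neg hlj, if_pos hli, if_pos hli.symm,
        if_neg (fun hh : j = l => hlj hh.symm), add_zero]
      by_cases hc : cnd pf h l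
      · rw [if_pos hc, if_pos hc]
        linear_combination (X : ℂ) * eps_sq ε hε l
      · rw [if_neg hc, if_neg hc]
    · rw [if_pos hlj, if_neg hli, if_neg (fun hh : i = l => hli hh.symm),
        if_pos hlj.symm, zero_add]
      by_cases hc : cnd pf h l
      · rw [if_pos hc, if_pos hc]
        linear_combination (-X : ℂ) * eps_sq ε hε l
      · rw [if_neg hc, if_neg hc]
    · rw [if_neg hli, if_neg hlj, if_neg (fun hh : i = l => hli hh.symm),
        if_neg (fun hh : j = l => hlj hh.symm), add_zero]
      by_cases hc : cnd pf h l
      · rw [if_pos hc]; ring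
      · rw [if_neg hc]
  rw [Finset.sum_congr rfl fun l _ => e1 l, Finset.sum_add_distrib,
    Finset.sum_ite_eq, Finset.sum_ite_eq]
  have hiff : cnd pf h i ↔ cnd pf h j :=
    ⟨fun hc => (cnd_unique pf hpf hc hi) ▸ hj, fun hc => (cnd_unique pf hpf hc hj) ▸ hi⟩
  simp only [Finset.mem_univ, if_true]
  by_cases hc : cnd pf h i
  · rw [if_pos hc, if_pos (hiff.mp hc)]; ring
  · rw [if_neg hc, if_neg (fun hcj => hc (hiff.mpr hcj))]; ring

/-- {w_i w̄_j, W_h} = −2i [j ∈ h] w_i w_j -/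
lemma pb_M_Wc (i j : Fin n) (h : Fin u) :
    pb (fun w => wfun ε i w * wbfun ε j w) (Wc ε pf h) =
      fun w => if cnd pf h j then -(2*I) * (wfun ε i w * wfun ε j w) else 0 := by
  rw [Wc_eq, pb_sum _ Finset.univ _
    (fun l _ => diff_ite _ _ ((differentiable_const _).fun_mul ((diff_wfun ε l).fun_pow 2)))]
  funext w
  simp only [pb_ite]
  have e1 : ∀ l : Fin n,
      (if cnd pf h l then pb (fun w => wfun ε i w * wbfun ε j w)
          (fun w => (ε l : ℂ) * wfun ε l w ^ 2) w else 0) =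
      if j = l then (if cnd pf h l then -(2*I) * (wfun ε i w * wfun ε l w) else 0) else 0 := by
    intro l
    rw [pb_smul _ _ _ ((diff_wfun ε l).fun_pow 2), pb_M_W ε hε i j l]
    by_cases hjl : j = l <;> by_cases hc : cnd pf h l <;>
      simp only [hjl, hc, eq_self_iff_true, ite_true, ite_false, not_false_iff,
        zero_mul, mul_zero]
    linear_combination (-(2*I) * (wfun ε i w * wfun ε l w)) * eps_sq ε hε l
  rw [Finset.sum_congr rfl fun l _ => e1 l, Finset.sum_ite_eq]
  simp

/-- {w_i w̄_j, W̄_h} = 2i [i ∈ h] w̄_j w̄_i -/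
lemma pb_M_Wbc (i j : Fin n) (h : Fin u) :
    pb (fun w => wfun ε i w * wbfun ε j w) (Wbc ε pf h) =
      fun w => if cnd pf h i then (2*I) * (wbfun ε j w * wbfun ε i w) else 0 := by
  rw [Wbc_eq, pb_sum _ Finset.univ _
    (fun l _ => diff_ite _ _ ((differentiable_const _).fun_mul ((diff_wbfun ε l).fun_pow 2)))]
  funext w
  simp only [pb_ite]
  have e1 : ∀ l : Fin n,
      (if cnd pf h l then pb (fun w => wfun ε i w * wbfun ε j w)
          (fun w => (ε l : ℂ) * wbfun ε l w ^ 2) w else 0) =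
      if i = l then (if cnd pf h l then (2*I) * (wbfun ε j w * wbfun ε l w) else 0) else 0 := by
    intro l
    rw [pb_smul _ _ _ ((diff_wbfun ε l).fun_pow 2), pb_M_Wb ε hε i j l]
    by_cases hil : i = l <;> by_cases hc : cnd pf h l <;>
      simp only [hil, hc, eq_self_iff_true, ite_true, ite_false, not_false_iff,
        zero_mul, mul_zero]
    linear_combination ((2*I) * (wbfun ε j w * wbfun ε l w)) * eps_sq ε hε l
  rw [Finset.sum_congr rfl fun l _ => e1 l, Finset.sum_ite_eq]
  simp

/-- {P_ij, W_h} = 0 when i, j belong to one group -/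
lemma pb_Pf_Wc (hpf : StrictMono pf) (h : Fin u) {g : Fin u} {i j : Fin n}
    (hi : cnd pf g i) (hj : cnd pf g j) :
    pb (Pf ε i j) (Wc ε pf h) = fun _ => 0 := by
  have hPf : Pf ε i j = fun w =>
      I * ((fun w => wfun ε i w * wbfun ε j w) w - (fun w => wfun ε j w * wbfun ε i w) w) := rfl
  rw [hPf, pb_smul_left _ _ _ (((diff_wfun ε i).fun_mul (diff_wbfun ε j)).fun_sub
      ((diff_wfun ε j).fun_mul (diff_wbfun ε i))),
    pb_sub_left _ _ _ ((diff_wfun ε i).fun_mul (diff_wbfun ε j))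
      ((diff_wfun ε j).fun_mul (diff_wbfun ε i)),
    pb_M_Wc ε pf hε i j h, pb_M_Wc ε pf hε j i h]
  have hiff : cnd pf h i ↔ cnd pf h j :=
    ⟨fun hc => (cnd_unique pf hpf hc hi) ▸ hj, fun hc => (cnd_unique pf hpf hc hj) ▸ hi⟩
  funext w
  by_cases hc : cnd pf h j
  · have hci : cnd pf h i := hiff.mpr hc
    simp only [hc, hci, ite_true]
    ring
  · have hci : ¬ cnd pf h i := fun hci => hc (hiff.mp hci)
    simp only [hc, hci, ite_false]
    ring

/-- {P_ij, W̄_h} = 0 when i, j belong to one group -/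
lemma pb_Pf_Wbc (hpf : StrictMono pf) (h : Fin u) {g : Fin u} {i j : Fin n}
    (hi : cnd pf g i) (hj : cnd pf g j) :
    pb (Pf ε i j) (Wbc ε pf h) = fun _ => 0 := by
  have hPf : Pf ε i j = fun w =>
      I * ((fun w => wfun ε i w * wbfun ε j w) w - (fun w => wfun ε j w * wbfun ε i w) w) := rfl
  rw [hPf, pb_smul_left _ _ _ (((diff_wfun ε i).fun_mul (diff_wbfun ε j)).fun_sub
      ((diff_wfun ε j).fun_mul (diff_wbfun ε i))),
    pb_sub_left _ _ _ ((diff_wfun ε i).fun_mul (diff_wbfun ε j))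
      ((diff_wfun ε j).fun_mul (diff_wbfun ε i)),
    pb_M_Wbc ε pf hε i j h, pb_M_Wbc ε pf hε j i h]
  have hiff : cnd pf h i ↔ cnd pf h j :=
    ⟨fun hc => (cnd_unique pf hpf hc hi) ▸ hj, fun hc => (cnd_unique pf hpf hc hj) ▸ hi⟩
  funext w
  by_cases hc : cnd pf h i
  · have hcj : cnd pf h j := hiff.mp hc
    simp only [hc, hcj, ite_true]
    ring
  · have hcj : ¬ cnd pf h j := fun hcj => hc (hiff.mpr hcj)
    simp only [hc, hcj, ite_false]
    ring

/-- {P_ij, R_m} = 0 when i, j belong to one group -/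
lemma pb_Pf_RWc (hpf : StrictMono pf) (m : Fin u → ℤ) {g : Fin u} {i j : Fin n}
    (hi : cnd pf g i) (hj : cnd pf g j) :
    pb (Pf ε i j) (RWc ε pf m) = fun _ => 0 := by
  have hR : RWc ε pf m = fun w => ∏ h : Fin u,
      (fun h => fun w => if 0 ≤ m h then Wc ε pf h w ^ (m h).toNat
        else Wbc ε pf h w ^ (-(m h)).toNat) h w := rfl
  rw [hR, pb_prod_eig (Pf ε i j) Finset.univ _ (fun _ => (0:ℂ))
    (fun h _ => by
      by_cases hm : 0 ≤ m h
      · simpa only [if_pos hm] using (diff_Wc ε pf h).fun_pow _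
      · simpa only [if_neg hm] using (diff_Wbc ε pf h).fun_pow _)
    (fun h _ => by
      by_cases hm : 0 ≤ m h
      · simp only [if_pos hm]
        rw [pb_pow_eig (Pf ε i j) _ _ 0 (diff_Wc ε pf h)
          (by rw [pb_Pf_Wc ε pf hε hpf h hi hj]; funext w; rw [zero_mul])]
        funext w; ring
      · simp only [if_neg hm]
        rw [pb_pow_eig (Pf ε i j) _ _ 0 (diff_Wbc ε pf h)
          (by rw [pb_Pf_Wbc ε pf hε hpf h hi hj]; funext w; rw [zero_mul])]
        funext w; ring)]
  funext w
  simp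

end PfJ

/-! ### J-level and polynomial machinery -/

section JPoly
variable {n u : ℕ} (ε : Fin n → ℤ) (pf : Fin (u + 1) → ℕ)

/-- the complexified linear combination `J = ∑ coef_h K_h` -/
def Jc (coef : Fin u → ℤ) : Phase n → ℂ := fun w => ∑ h : Fin u, (coef h : ℂ) * Kc ε pf h w

lemma diff_Jc (coef : Fin u → ℤ) : Differentiable ℝ (Jc ε pf coef) :=
  Differentiable.fun_sum fun h _ => (differentiable_const _).fun_mul (diff_Kc ε pf h)

lemma pb_J_left (coef : Fin u → ℤ) (f : Phase n → ℂ) :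
    pb (Jc ε pf coef) f = fun w => ∑ h : Fin u, (coef h : ℂ) * pb (Kc ε pf h) f w := by
  unfold Jc
  rw [pb_sum_left f Finset.univ (fun h => fun w => (coef h : ℂ) * Kc ε pf h w)
    (fun h _ => (differentiable_const _).mul (diff_Kc ε pf h))]
  funext w
  exact Finset.sum_congr rfl fun h _ => by
    rw [pb_smul_left _ _ _ (diff_Kc ε pf h)]

variable (hε : ∀ i, ε i = 1 ∨ ε i = -1)
include hε

lemma pb_K_J (h : Fin u) (coef : Fin u → ℤ) :
    pb (Kc ε pf h) (Jc ε pf coef) = fun _ => 0 := by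
  unfold Jc
  rw [pb_sum _ Finset.univ _ (fun g _ => (differentiable_const _).fun_mul (diff_Kc ε pf g))]
  funext w
  refine Finset.sum_eq_zero fun g _ => ?_
  rw [pb_smul _ _ _ (diff_Kc ε pf g), pb_K_K ε pf hε h g]
  simp

lemma pb_J_J (c c' : Fin u → ℤ) : pb (Jc ε pf c) (Jc ε pf c') = fun _ => 0 := by
  rw [pb_J_left]
  funext w
  refine Finset.sum_eq_zero fun h _ => ?_
  rw [pb_K_J ε pf hε h c']
  simp

lemma pb_J_Pf (hpf : StrictMono pf) (coef : Fin u → ℤ) {g : Fin u} {i j : Fin n}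
    (hij : i ≠ j) (hi : cnd pf g i) (hj : cnd pf g j) :
    pb (Jc ε pf coef) (Pf ε i j) = fun _ => 0 := by
  rw [pb_J_left]
  funext w
  refine Finset.sum_eq_zero fun h _ => ?_
  rw [pb_K_Pf ε pf hε hpf h hij hi hj]
  simp

lemma pb_J_Wc (hpf : StrictMono pf) (coef : Fin u → ℤ) (h' : Fin u) :
    pb (Jc ε pf coef) (Wc ε pf h') =
      fun w => (-(2*I) * (coef h' : ℂ)) * Wc ε pf h' w := by
  rw [pb_J_left]
  funext w
  have e1 : ∀ h : Fin u, (coef h : ℂ) * pb (Kc ε pf h) (Wc ε pf h') w =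
      if h = h' then (-(2*I) * (coef h : ℂ)) * Wc ε pf h' w else 0 := by
    intro h
    rw [pb_K_Wc ε pf hε hpf h h']
    by_cases hh : h = h'
    · rw [if_pos hh, if_pos hh]; ring
    · rw [if_neg hh, if_neg hh]; ring
  rw [Finset.sum_congr rfl fun h _ => e1 h, Finset.sum_ite_eq']
  simp

lemma pb_J_Wbc (hpf : StrictMono pf) (coef : Fin u → ℤ) (h' : Fin u) :
    pb (Jc ε pf coef) (Wbc ε pf h') =
      fun w => ((2*I) * (coef h' : ℂ)) * Wbc ε pf h' w := by
  rw [pb_J_left]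
  funext w
  have e1 : ∀ h : Fin u, (coef h : ℂ) * pb (Kc ε pf h) (Wbc ε pf h') w =
      if h = h' then ((2*I) * (coef h : ℂ)) * Wbc ε pf h' w else 0 := by
    intro h
    rw [pb_K_Wbc ε pf hε hpf h h']
    by_cases hh : h = h'
    · rw [if_pos hh, if_pos hh]; ring
    · rw [if_neg hh, if_neg hh]; ring
  rw [Finset.sum_congr rfl fun h _ => e1 h, Finset.sum_ite_eq']
  simp

/-- {J, R_m} = −2i (∑ coef_h m_h) R_m -/
lemma pb_J_RWc (hpf : StrictMono pf) (coef : Fin u → ℤ) (m : Fin u → ℤ) :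
    pb (Jc ε pf coef) (RWc ε pf m) =
      fun w => (-(2*I) * ∑ h : Fin u, ((coef h : ℂ) * (m h : ℂ))) * RWc ε pf m w := by
  have hR : RWc ε pf m = fun w => ∏ h : Fin u,
      (fun h => fun w => if 0 ≤ m h then Wc ε pf h w ^ (m h).toNat
        else Wbc ε pf h w ^ (-(m h)).toNat) h w := rfl
  rw [hR, pb_prod_eig (Jc ε pf coef) Finset.univ _
    (fun h => -(2*I) * ((coef h : ℂ) * (m h : ℂ)))
    (fun h _ => by
      by_cases hm : 0 ≤ m h
      · simpa only [if_pos hm] using (diff_Wc ε pf h).fun_pow _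
      · simpa only [if_neg hm] using (diff_Wbc ε pf h).fun_pow _)
    (fun h _ => by
      by_cases hm : 0 ≤ m h
      · simp only [if_pos hm]
        rw [pb_pow_eig (Jc ε pf coef) _ _ (-(2*I) * (coef h : ℂ)) (diff_Wc ε pf h)
          (pb_J_Wc ε pf hε hpf coef h)]
        funext w
        have hcast : (((m h).toNat : ℕ) : ℂ) = ((m h : ℤ) : ℂ) := by
          exact_mod_cast congrArg (fun z : ℤ => (z : ℂ)) (Int.toNat_of_nonneg hm)
        rw [hcast]
        ring
      · simp only [if_neg hm]
        rw [pb_pow_eig (Jc ε pf coef) _ _ ((2*I) * (coef h : ℂ)) (diff_Wbc ε pf h)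
          (pb_J_Wbc ε pf hε hpf coef h)]
        funext w
        have hcast : ((((-(m h)).toNat : ℕ)) : ℂ) = -((m h : ℤ) : ℂ) := by
          have := Int.toNat_of_nonneg (by omega : (0:ℤ) ≤ -(m h))
          exact_mod_cast congrArg (fun z : ℤ => (z : ℂ)) this
        rw [hcast]
        ring)]
  funext w
  rw [Finset.mul_sum]

end JPoly

section Poly
variable {n : ℕ}
open MvPolynomial

lemma diff_eval₂ {σ : Type*} (g : σ → Phase n → ℂ) (hg : ∀ s, Differentiable ℝ (g s))
    (Q : MvPolynomial σ ℝ) :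
    Differentiable ℝ (fun w => eval₂ Complex.ofRealHom (fun s => g s w) Q) := by
  induction Q using MvPolynomial.induction_on with
  | C a => simpa only [eval₂_C] using differentiable_const (Complex.ofRealHom a)
  | add p q hp hq => simp only [eval₂_add]; exact hp.add hq
  | mul_X p s hp => simp only [eval₂_mul, eval₂_X]; exact hp.mul (hg s)

lemma pb_eval₂ {σ : Type*} (f : Phase n → ℂ) (g : σ → Phase n → ℂ)
    (hg : ∀ s, Differentiable ℝ (g s)) (h0 : ∀ s, pb f (g s) = fun _ => 0)
    (Q : MvPolynomial σ ℝ) :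
    pb f (fun w => eval₂ Complex.ofRealHom (fun s => g s w) Q) = fun _ => 0 := by
  induction Q using MvPolynomial.induction_on with
  | C a => simpa only [eval₂_C] using pb_const f (Complex.ofRealHom a)
  | add p q hp hq =>
    have := pb_add f (fun w => eval₂ Complex.ofRealHom (fun s => g s w) p)
      (fun w => eval₂ Complex.ofRealHom (fun s => g s w) q)
      (diff_eval₂ g hg p) (diff_eval₂ g hg q)
    simp only [eval₂_add]
    rw [this, hp, hq]
    funext w; simp
  | mul_X p s hp =>
    have := pb_mul f (fun w => eval₂ Complex.ofRealHom (fun s => g s w) p)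
      (fun w => g s w) (diff_eval₂ g hg p) (hg s)
    simp only [eval₂_mul, eval₂_X]
    rw [this, hp, h0 s]
    funext w; simp

/-- complexification of a polynomial evaluation -/
lemma oR_eval {σ : Type*} (x : σ → Phase n → ℝ) (X : σ → Phase n → ℂ)
    (hx : ∀ s w, ((x s w : ℝ) : ℂ) = X s w) (Q : MvPolynomial σ ℝ) :
    oR (fun w => eval (fun s => x s w) Q) =
      fun w => eval₂ Complex.ofRealHom (fun s => X s w) Q := by
  funext w
  show Complex.ofRealHom (eval (fun s => x s w) Q) = _
  rw [eval, coe_eval₂Hom, eval₂_comp_left Complex.ofRealHom]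
  congr 1
  funext s
  exact hx s w

end Poly

/-! ### real-complex conversions and counting -/

section Conv
variable {n u : ℕ} (ε : Fin n → ℤ) (pf : Fin (u + 1) → ℕ)

lemma conj_zf (j : Fin n) (w : Phase n) : (starRingEnd ℂ) (zf j w) = zbf j w := by
  unfold zf zbf
  rw [map_div₀]
  simp [Complex.conj_ofReal, Complex.conj_I]
  ring

lemma conj_zbf (j : Fin n) (w : Phase n) : (starRingEnd ℂ) (zbf j w) = zf j w := by
  unfold zf zbf
  rw [map_div₀]
  simp [Complex.conj_ofReal, Complex.conj_I]

lemma conj_wfun (i : Fin n) (w : Phase n) :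
    (starRingEnd ℂ) (wfun ε i w) = wbfun ε i w := by
  unfold wfun wbfun
  split_ifs
  · exact conj_zf i w
  · exact conj_zbf i w

lemma conj_wbfun (i : Fin n) (w : Phase n) :
    (starRingEnd ℂ) (wbfun ε i w) = wfun ε i w := by
  unfold wfun wbfun
  split_ifs
  · exact conj_zbf i w
  · exact conj_zf i w

lemma Pf_re (i j : Fin n) (w : Phase n) : ((PfR ε i j w : ℝ) : ℂ) = Pf ε i j w := by
  have hconj : (starRingEnd ℂ) (Pf ε i j w) = Pf ε i j w := by
    unfold Pf
    simp only [map_mul, map_sub, Complex.conj_I, conj_wfun, conj_wbfun]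
    ring
  exact Complex.conj_eq_iff_re.mp hconj

lemma Iact_re (j : Fin n) (w : Phase n) : ((IR j w : ℝ) : ℂ) = Iact j w := by
  unfold IR Iact zf zbf
  rw [div_mul_div_comm, sqrt2_sq]
  push_cast
  linear_combination (((w.2 j : ℝ) : ℂ) ^ 2 / 2) * Complex.I_sq

lemma oR_KR (h : Fin u) : oR (KR ε pf h) = Kc ε pf h := by
  funext w
  show Complex.ofRealHom (KR ε pf h w) = Kc ε pf h w
  unfold KR Kc
  rw [map_sum]
  refine Finset.sum_congr rfl fun i _ => ?_
  split_ifs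
  · rw [map_mul]
    have h1 : (Complex.ofRealHom (IR i w) : ℂ) = Iact i w := Iact_re i w
    have h2 : (Complex.ofRealHom ((ε i : ℤ) : ℝ) : ℂ) = ((ε i : ℤ) : ℂ) := by
      push_cast
      rfl
    rw [h1, h2]
  · exact map_zero _

lemma oR_J (coef : Fin u → ℤ) :
    oR (fun w => ∑ h : Fin u, ((coef h : ℤ) : ℝ) * KR ε pf h w) = Jc ε pf coef := by
  funext w
  show Complex.ofRealHom _ = _
  unfold Jc
  rw [map_sum]
  refine Finset.sum_congr rfl fun h _ => ?_
  rw [map_mul]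
  have := congrFun (oR_KR ε pf h) w
  simp only [oR] at this
  rw [show (Complex.ofRealHom (KR ε pf h w)) = ((KR ε pf h w : ℝ) : ℂ) from rfl, this]
  norm_num

/-- telescoping sum -/
lemma tele : ∀ (u : ℕ) (pf : Fin (u + 1) → ℕ), Monotone pf →
    ∑ h : Fin u, (pf h.succ - pf h.castSucc) = pf (Fin.last u) - pf 0 := by
  intro u
  induction u with
  | zero => intro pf _; simp [Fin.last]
  | succ u ih =>
    intro pf hpf
    rw [Fin.sum_univ_castSucc]
    have e1 : ∀ h : Fin u, pf (h.castSucc.succ) - pf (h.castSucc.castSucc) =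
        (fun i : Fin (u+1) => pf i.castSucc) h.succ -
        (fun i : Fin (u+1) => pf i.castSucc) h.castSucc := by
      intro h
      simp only [Fin.succ_castSucc]
    calc (∑ h : Fin u, (pf h.castSucc.succ - pf h.castSucc.castSucc)) +
          (pf (Fin.last u).succ - pf (Fin.last u).castSucc)
        = ((fun i : Fin (u+1) => pf i.castSucc) (Fin.last u) -
            (fun i : Fin (u+1) => pf i.castSucc) 0) +
          (pf (Fin.last u).succ - pf (Fin.last u).castSucc) := by
          rw [Finset.sum_congr rfl fun h _ => e1 h,
            ih (fun i : Fin (u+1) => pf i.castSucc)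
              (fun a b hab => hpf (Fin.castSucc_le_castSucc_iff.mpr hab))]
      _ = pf (Fin.last (u+1)) - pf 0 := by
          simp only
          have h1 : pf 0 ≤ pf (Fin.last u).castSucc := hpf (Fin.zero_le _)
          have h2 : pf (Fin.last u).castSucc ≤ pf (Fin.last u).succ := hpf (by
            rw [Fin.le_def]; simp)
          have h3 : (Fin.last u).succ = Fin.last (u+1) := rfl
          have h4 : (Fin.castSucc (0 : Fin (u+1))) = (0 : Fin (u+2)) := rfl
          rw [← h3, h4]
          omega

end Conv

/-! ### top-level bridge lemmas -/

section Bridge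
variable {n u : ℕ} (ε : Fin n → ℤ) (pf : Fin (u + 1) → ℕ)
  (hε : ∀ i, ε i = 1 ∨ ε i = -1) (hpf : StrictMono pf)

/-- real bracket with an imaginary part vanishes whenever the complex bracket does -/
lemma pbR_im_zero {f : Phase n → ℝ} {G : Phase n → ℂ} (hG : Differentiable ℝ G)
    (h1 : pb (oR f) G = fun _ => 0) :
    pbR f (fun w => (G w).im) = fun _ => 0 := by
  refine pbR_im f G hG h1 ?_
  have hcf : (fun w => (starRingEnd ℂ) (oR f w)) = oR f := by
    funext w; exact Complex.conj_ofReal _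
  have := pb_conj (oR f) G
  rw [hcf, h1] at this
  rw [this]
  funext w
  simp

include hε

lemma pb_M_M_disj {a b c d : Fin n} (hac : a ≠ c) (had : a ≠ d) (hbc : b ≠ c)
    (hbd : b ≠ d) :
    pb (fun w => wfun ε a w * wbfun ε b w) (fun w => wfun ε c w * wbfun ε d w) =
      fun _ => 0 := by
  rw [pb_mul₂ (wfun ε a) (wbfun ε b) (wfun ε c) (wbfun ε d)
    (diff_wfun ε a) (diff_wbfun ε b) (diff_wfun ε c) (diff_wbfun ε d),
    pb_wb_wb ε hε, pb_wb_w ε hε, pb_w_wb ε hε, pb_w_w ε hε]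
  funext w
  rw [if_neg hbc, if_neg had]
  ring

lemma pb_Pf_Pf_disj {a b c d : Fin n} (hac : a ≠ c) (had : a ≠ d) (hbc : b ≠ c)
    (hbd : b ≠ d) :
    pb (Pf ε a b) (Pf ε c d) = fun _ => 0 := by
  have hPab : Pf ε a b = fun w =>
      I * ((fun w => wfun ε a w * wbfun ε b w) w - (fun w => wfun ε b w * wbfun ε a w) w) := rfl
  have hPcd : Pf ε c d = fun w =>
      I * ((fun w => wfun ε c w * wbfun ε d w) w - (fun w => wfun ε d w * wbfun ε c w) w) := rfl
  rw [hPab, hPcd,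
    pb_smul_left _ _ _ (((diff_wfun ε a).fun_mul (diff_wbfun ε b)).fun_sub
      ((diff_wfun ε b).fun_mul (diff_wbfun ε a))),
    pb_smul _ _ _ (((diff_wfun ε c).fun_mul (diff_wbfun ε d)).fun_sub
      ((diff_wfun ε d).fun_mul (diff_wbfun ε c))),
    pb_sub _ _ _ ((diff_wfun ε c).fun_mul (diff_wbfun ε d)) ((diff_wfun ε d).fun_mul (diff_wbfun ε c)),
    pb_sub_left _ _ _ ((diff_wfun ε a).fun_mul (diff_wbfun ε b))
      ((diff_wfun ε b).fun_mul (diff_wbfun ε a)),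
    pb_sub_left _ _ _ ((diff_wfun ε a).fun_mul (diff_wbfun ε b))
      ((diff_wfun ε b).fun_mul (diff_wbfun ε a)),
    pb_M_M_disj ε hε hac had hbc hbd,
    pb_M_M_disj ε hε hbc hbd hac had,
    pb_M_M_disj ε hε had hac hbd hbc,
    pb_M_M_disj ε hε hbd hbc had hac]
  funext w
  simp

open MvPolynomial in
/-- bracket with a polynomial in the group momenta vanishes whenever the brackets with
the momenta do -/
lemma pb_poly_right (f : Phase n → ℂ) {g : Phase n → ℝ} (h : Fin u)
    (hg : IsPolyInGrpMomenta ε pf h g)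
    (hf : ∀ {i j : Fin n}, i ≠ j → cnd pf h i → cnd pf h j → pb f (Pf ε i j) = fun _ => 0) :
    pb f (oR g) = fun _ => 0 := by
  obtain ⟨Q, -, hQ⟩ := hg
  have hx : ∀ (s : {ij : Fin n × Fin n //
        pf h.castSucc ≤ (ij.1 : ℕ) ∧ ij.1 < ij.2 ∧ (ij.2 : ℕ) < pf h.succ}) (w : Phase n),
      ((PfR ε s.1.1 s.1.2 w : ℝ) : ℂ) = Pf ε s.1.1 s.1.2 w :=
    fun s w => Pf_re ε s.1.1 s.1.2 w
  have hg2 := oR_eval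
    (fun (s : {ij : Fin n × Fin n //
        pf h.castSucc ≤ (ij.1 : ℕ) ∧ ij.1 < ij.2 ∧ (ij.2 : ℕ) < pf h.succ}) (w : Phase n) =>
      PfR ε s.1.1 s.1.2 w)
    (fun (s : {ij : Fin n × Fin n //
        pf h.castSucc ≤ (ij.1 : ℕ) ∧ ij.1 < ij.2 ∧ (ij.2 : ℕ) < pf h.succ}) (w : Phase n) =>
      Pf ε s.1.1 s.1.2 w) hx Q
  rw [hQ, hg2]
  refine pb_eval₂ f
    (fun (s : {ij : Fin n × Fin n //
        pf h.castSucc ≤ (ij.1 : ℕ) ∧ ij.1 < ij.2 ∧ (ij.2 : ℕ) < pf h.succ}) (w : Phase n) =>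
      Pf ε s.1.1 s.1.2 w)
    (fun s => diff_Pf ε s.1.1 s.1.2) (fun s => ?_) Q
  have h1 : cnd pf h s.1.1 := ⟨s.2.1, by
    have h2 := s.2.2.1
    rw [Fin.lt_def] at h2
    have h3 := s.2.2.2
    omega⟩
  have h2 : cnd pf h s.1.2 := ⟨by
    have h2 := s.2.2.1
    rw [Fin.lt_def] at h2
    have h3 := s.2.1
    omega, s.2.2.2⟩
  exact hf (Fin.ne_of_lt s.2.2.1) h1 h2

include hpf

/-- {J_r, J_r'} = 0 (real form) -/
lemma pbR_J_J' (c c' : Fin u → ℤ) :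
    pbR (fun w => ∑ h : Fin u, ((c h : ℤ) : ℝ) * KR ε pf h w)
      (fun w => ∑ h : Fin u, ((c' h : ℤ) : ℝ) * KR ε pf h w) = fun _ => 0 := by
  apply pbR_eq_zero
  rw [oR_J, oR_J]
  exact pb_J_J ε pf hε c c'

/-- {J_r, Z} = 0 (real form) -/
lemma pbR_J_poly (coef : Fin u → ℤ) (h : Fin u) {g : Phase n → ℝ}
    (hg : IsPolyInGrpMomenta ε pf h g) :
    pbR (fun w => ∑ h : Fin u, ((coef h : ℤ) : ℝ) * KR ε pf h w) g = fun _ => 0 := by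
  apply pbR_eq_zero
  rw [oR_J]
  exact pb_poly_right ε pf hε (Jc ε pf coef) h hg
    (fun hij hi hj => pb_J_Pf ε pf hε hpf coef hij hi hj)

/-- {J_r, Im R_m} = 0 when r ⊥ m (real form) -/
lemma pbR_J_im (coef : Fin u → ℤ) (m : Fin u → ℤ)
    (h0 : ∑ h : Fin u, coef h * m h = 0) :
    pbR (fun w => ∑ h : Fin u, ((coef h : ℤ) : ℝ) * KR ε pf h w)
      (fun w => (RWc ε pf m w).im) = fun _ => 0 := by
  refine pbR_im_zero (diff_RWc ε pf m) ?_
  rw [oR_J, pb_J_RWc ε pf hε hpf coef m]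
  have hs : (∑ h : Fin u, ((coef h : ℂ) * (m h : ℂ))) = 0 := by
    have := congrArg (fun z : ℤ => (z : ℂ)) h0
    push_cast at this
    exact this
  funext w
  rw [hs]
  ring

/-- {Z, Z'} = 0 for polynomials in momenta of different groups (real form) -/
lemma pbR_poly_poly (h h' : Fin u) (hne : h ≠ h') {g g' : Phase n → ℝ}
    (hg : IsPolyInGrpMomenta ε pf h g) (hg' : IsPolyInGrpMomenta ε pf h' g') :
    pbR g g' = fun _ => 0 := by
  apply pbR_eq_zero
  refine pb_poly_right ε pf hε (oR g) h' hg' (fun {i' j'} hij' hi' hj' => ?_)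
  have inner : pb (Pf ε i' j') (oR g) = fun _ => 0 := by
    refine pb_poly_right ε pf hε (Pf ε i' j') h hg (fun {i j} hij hi hj => ?_)
    have hac : i' ≠ i := fun he => hne (cnd_unique pf hpf (he ▸ hi') hi).symm
    have had : i' ≠ j := fun he => hne (cnd_unique pf hpf (he ▸ hi') hj).symm
    have hbc : j' ≠ i := fun he => hne (cnd_unique pf hpf (he ▸ hj') hi).symm
    have hbd : j' ≠ j := fun he => hne (cnd_unique pf hpf (he ▸ hj') hj).symm
    exact pb_Pf_Pf_disj ε hε hac had hbc hbd
  rw [pb_swap, inner]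
  funext w
  simp

/-- {Z, Im R_m} = 0 (real form) -/
lemma pbR_poly_im (h : Fin u) {g : Phase n → ℝ} (hg : IsPolyInGrpMomenta ε pf h g)
    (m : Fin u → ℤ) :
    pbR g (fun w => (RWc ε pf m w).im) = fun _ => 0 := by
  refine pbR_im_zero (diff_RWc ε pf m) ?_
  have inner : pb (RWc ε pf m) (oR g) = fun _ => 0 := by
    refine pb_poly_right ε pf hε (RWc ε pf m) h hg (fun {i j} hij hi hj => ?_)
    rw [pb_swap, pb_Pf_RWc ε pf hε hpf m hi hj]
    funext w
    simp
  rw [pb_swap, inner]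
  funext w
  simp

end Bridge

end S10

/-- Proposition 2.2: the set
`F = (J_{r⁽¹⁾},…,J_{r⁽ᵏ'⁾}, Z₁,…,Z_u; J_{r⁽ᵏ'⁺¹⁾},…,J_{r⁽ᵘ⁾}, Im R_{m⁽¹⁾},…,Im R_{m⁽ᵘ⁻ᵏ'⁾}, L₁,…,L_u)`
consists of `2n − k` functions, `k = k' + ∑_h z_h`, and each of its `k` central elements
`(J_{r⁽¹⁾},…,J_{r⁽ᵏ'⁾}, Z₁,…,Z_u)` Poisson-commutes with every element of `F`. -/
theorem statement10 (n u : ℕ) (hu : 1 ≤ u)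
    (pf : Fin (u + 1) → ℕ) (hpf : StrictMono pf) (hpf0 : pf 0 = 0)
    (hpfn : pf (Fin.last u) = n)
    (ε : Fin n → ℤ) (hε : ∀ i, ε i = 1 ∨ ε i = -1)
    (s : Fin u → ℤ) (hs : ∀ h, 1 ≤ s h)
    (q : Fin u → ℕ) (hq : ∀ h, q h = pf h.succ - pf h.castSucc)
    (z : Fin u → ℕ)
    (hz : ∀ h, (q h = 1 → z h = 0) ∧ (1 < q h → 1 ≤ z h ∧ z h ≤ q h - 1))
    (Z : (h : Fin u) → Fin (z h) → Phase n → ℝ)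
    (L : (h : Fin u) → Fin (2 * (q h - z h - 1)) → Phase n → ℝ)
    (hZpoly : ∀ h a, IsPolyInGrpMomenta ε pf h (Z h a))
    (hLpoly : ∀ h b, IsPolyInGrpMomenta ε pf h (L h b))
    (hZcomm : ∀ h, ∀ a : Fin (z h), ∀ b : Fin (z h) ⊕ Fin (2 * (q h - z h - 1)),
      pbR (Z h a) (Sum.elim (Z h) (L h) b) = 0)
    (k' : ℕ) (hk'1 : 1 ≤ k') (hk'2 : k' ≤ u)
    (r : Fin u → Fin u → ℤ) (hr : LinearIndependent ℤ r)
    (hr0 : r ⟨0, by omega⟩ = s)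
    (m : Fin (u - k') → Fin u → ℤ) (hm : LinearIndependent ℤ m)
    (horth : ∀ h : Fin u, (h : ℕ) < k' → ∀ j : Fin (u - k'),
      ∑ t : Fin u, r h t * m j t = 0)
    (F : (Fin k' ⊕ (Σ h : Fin u, Fin (z h))) ⊕
        ((Fin (u - k') ⊕ Fin (u - k')) ⊕ (Σ h : Fin u, Fin (2 * (q h - z h - 1)))) →
        Phase n → ℝ)
    (hF : F = Sum.elim
      (Sum.elim
        (fun i : Fin k' => fun w =>
          ∑ h : Fin u, (r ⟨(i : ℕ), by have := i.isLt; omega⟩ h : ℝ) * KR ε pf h w)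
        (fun c : Σ h : Fin u, Fin (z h) => Z c.1 c.2))
      (Sum.elim
        (Sum.elim
          (fun i : Fin (u - k') => fun w =>
            ∑ h : Fin u, (r ⟨k' + (i : ℕ), by have := i.isLt; omega⟩ h : ℝ) * KR ε pf h w)
          (fun j : Fin (u - k') => fun w => (RWc ε pf (m j) w).im))
        (fun c : Σ h : Fin u, Fin (2 * (q h - z h - 1)) => L c.1 c.2))) :
    Fintype.card ((Fin k' ⊕ (Σ h : Fin u, Fin (z h))) ⊕
        ((Fin (u - k') ⊕ Fin (u - k')) ⊕ (Σ h : Fin u, Fin (2 * (q h - z h - 1)))))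
      = 2 * n - (k' + ∑ h : Fin u, z h) ∧
    ∀ c : Fin k' ⊕ (Σ h : Fin u, Fin (z h)),
      ∀ i : (Fin k' ⊕ (Σ h : Fin u, Fin (z h))) ⊕
        ((Fin (u - k') ⊕ Fin (u - k')) ⊕ (Σ h : Fin u, Fin (2 * (q h - z h - 1)))),
        pbR (F (Sum.inl c)) (F i) = 0 := by
  subst hF
  constructor
  · -- cardinality count
    have hq1 : ∀ h : Fin u, 1 ≤ q h := fun h => by
      rw [hq h]
      have := hpf (Fin.castSucc_lt_succ (i := h))
      omega
    have hz1 : ∀ h : Fin u, z h + 1 ≤ q h := fun h => by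
      rcases Nat.lt_or_ge 1 (q h) with h1 | h1
      · have := (hz h).2 h1
        omega
      · have hq1' := hq1 h
        have hqe : q h = 1 := by omega
        have := (hz h).1 hqe
        omega
    have hsumq : ∑ h : Fin u, q h = n := by
      rw [Finset.sum_congr rfl fun h (_ : h ∈ Finset.univ) => hq h,
        S10.tele u pf hpf.monotone, hpfn, hpf0]
      omega
    have hS : (∑ h : Fin u, (q h - (z h + 1))) + (∑ h : Fin u, (z h + 1)) =
        ∑ h : Fin u, q h := by
      rw [← Finset.sum_add_distrib]
      exact Finset.sum_congr rfl fun h _ => Nat.sub_add_cancel (hz1 h)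
    have hz2 : ∑ h : Fin u, (z h + 1) = (∑ h : Fin u, z h) + u := by
      rw [Finset.sum_add_distrib]
      simp
    have hL : ∑ h : Fin u, 2 * (q h - z h - 1) = 2 * ∑ h : Fin u, (q h - (z h + 1)) := by
      rw [Finset.mul_sum]
      exact Finset.sum_congr rfl fun h _ => by omega
    simp only [Fintype.card_sum, Fintype.card_sigma, Fintype.card_fin]
    rw [hL]
    omega
  · -- commutation
    intro c i
    rcases c with a | ⟨h, a⟩
    · -- central element J_{r^a}
      rcases i with (b | ⟨h', b⟩) | ((b | j) | ⟨h', b⟩) <;>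
        simp only [Sum.elim_inl, Sum.elim_inr]
      · exact S10.pbR_J_J' ε pf hε hpf _ _
      · exact S10.pbR_J_poly ε pf hε hpf _ h' (hZpoly h' b)
      · exact S10.pbR_J_J' ε pf hε hpf _ _
      · exact S10.pbR_J_im ε pf hε hpf _ (m j)
          (horth ⟨(a : ℕ), lt_of_lt_of_le a.isLt hk'2⟩ a.isLt j)
      · exact S10.pbR_J_poly ε pf hε hpf _ h' (hLpoly h' b)
    · -- central element Z_h^a
      rcases i with (b | ⟨h', b⟩) | ((b | j) | ⟨h', b⟩) <;>
        simp only [Sum.elim_inl, Sum.elim_inr]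
      · rw [S10.pbR_swap, S10.pbR_J_poly ε pf hε hpf _ h (hZpoly h a)]
        funext w
        simp
      · by_cases hhe : h' = h
        · subst hhe
          exact hZcomm h' a (Sum.inl b)
        · exact S10.pbR_poly_poly ε pf hε hpf h h' (fun he => hhe he.symm)
            (hZpoly h a) (hZpoly h' b)
      · rw [S10.pbR_swap, S10.pbR_J_poly ε pf hε hpf _ h (hZpoly h a)]
        funext w
        simp
      · exact S10.pbR_poly_im ε pf hε hpf h (hZpoly h a) (m j)
      · by_cases hhe : h' = h
        · subst hhe
          exact hZcomm h' a (Sum.inr b)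
        · exact S10.pbR_poly_poly ε pf hε hpf h h' (fun he => hhe he.symm)
            (hZpoly h a) (hLpoly h' b)

end
end

section
/- Let p and q be distinct positive integers and F_1 = p I_1 + p I_2 + q I_3 on ℝ^6. The real vector space of real homogeneous degree-2 polynomials f in (x_1,x_2,x_3,p_1,p_2,p_3) satisfying {F_1, f} = 0 has dimension 5, and the five polynomials L_1, L_2, L_3, L_4, L_5 form a basis of it. -/
noncomputable section

open Complex

/-- `L₁ = −(x₁x₂ + p₁p₂)/2`. -/
def L1 (w : Phase 3) : ℝ := -(w.1 0 * w.1 1 + w.2 0 * w.2 1) / 2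

/-- `L₂ = (p₁x₂ − x₁p₂)/2`. -/
def L2 (w : Phase 3) : ℝ := (w.2 0 * w.1 1 - w.1 0 * w.2 1) / 2

/-- `L₃ = (−x₁² − p₁² + x₂² + p₂²)/4`. -/
def L3 (w : Phase 3) : ℝ := (-w.1 0 ^ 2 - w.2 0 ^ 2 + w.1 1 ^ 2 + w.2 1 ^ 2) / 4

/-- `L₄ = −(x₁² + p₁² + x₂² + p₂²)/4`. -/
def L4 (w : Phase 3) : ℝ := -(w.1 0 ^ 2 + w.2 0 ^ 2 + w.1 1 ^ 2 + w.2 1 ^ 2) / 4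

/-- `L₅ = (x₃² + p₃²)/2`. -/
def L5 (w : Phase 3) : ℝ := (w.1 2 ^ 2 + w.2 2 ^ 2) / 2

/-- The five functions `L₁,…,L₅` as a family. -/
def Lfam : Fin 5 → Phase 3 → ℝ := ![L1, L2, L3, L4, L5]


/-! ### Auxiliary machinery -/

section Aux

open MvPolynomial

abbrev Idx : Type := Fin 3 ⊕ Fin 3

def Vc : Idx → (Phase 3 →L[ℝ] ℝ)
  | .inl k => (ContinuousLinearMap.proj k).comp (ContinuousLinearMap.fst ℝ (Fin 3 → ℝ) (Fin 3 → ℝ))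
  | .inr k => (ContinuousLinearMap.proj k).comp (ContinuousLinearMap.snd ℝ (Fin 3 → ℝ) (Fin 3 → ℝ))

@[simp] lemma Vc_inl (k : Fin 3) (w : Phase 3) : Vc (.inl k) w = w.1 k := rfl
@[simp] lemma Vc_inr (k : Fin 3) (w : Phase 3) : Vc (.inr k) w = w.2 k := rfl

lemma Vc_elim (i : Idx) (w : Phase 3) : Vc i w = Sum.elim w.1 w.2 i := by cases i <;> rfl

def qf (A : Idx → Idx → ℝ) : Phase 3 → ℝ := fun w => ∑ i : Idx, ∑ j : Idx, A i j * (Vc i w * Vc j w)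

lemma qf_hasFDerivAt (A : Idx → Idx → ℝ) (w : Phase 3) :
    HasFDerivAt (qf A)
      (∑ i : Idx, ∑ j : Idx, A i j • (Vc i w • (Vc j : Phase 3 →L[ℝ] ℝ) + Vc j w • (Vc i : Phase 3 →L[ℝ] ℝ))) w := by
  apply HasFDerivAt.fun_sum
  intro i _
  apply HasFDerivAt.fun_sum
  intro j _
  exact ((Vc i).hasFDerivAt.mul (Vc j).hasFDerivAt).const_mul (A i j)

lemma fderiv_qf (A : Idx → Idx → ℝ) (w u : Phase 3) :
    fderiv ℝ (qf A) w u = ∑ i : Idx, ∑ j : Idx, A i j * (Vc i w * Vc j u + Vc j w * Vc i u) := by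
  rw [(qf_hasFDerivAt A w).fderiv]
  simp [ContinuousLinearMap.sum_apply, smul_eq_mul, mul_add]

def od (c d : ℝ) : Fin 3 → Fin 3 → ℝ := fun a b =>
  if a = 0 ∧ b = 1 then c else if a = 1 ∧ b = 0 then d else 0

def z33 : Fin 3 → Fin 3 → ℝ := fun _ _ => 0

def dg (c1 c2 c3 : ℝ) : Fin 3 → Fin 3 → ℝ := fun a b => if a = b then ![c1, c2, c3] a else 0

def bm (xx xp pp : Fin 3 → Fin 3 → ℝ) : Idx → Idx → ℝ := fun i j =>
  Sum.elim (fun a => Sum.elim (fun b => xx a b) (fun b => xp a b) j)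
           (fun a => Sum.elim (fun b => xp b a) (fun b => pp a b) j) i

@[simp] lemma Vc_inl_dx (m k : Fin 3) :
    Vc (.inl m) ((Pi.single k 1 : Fin 3 → ℝ), (0 : Fin 3 → ℝ)) = if m = k then 1 else 0 := by
  simp [Pi.single_apply]
@[simp] lemma Vc_inr_dx (m k : Fin 3) :
    Vc (.inr m) ((Pi.single k 1 : Fin 3 → ℝ), (0 : Fin 3 → ℝ)) = 0 := by simp
@[simp] lemma Vc_inl_dp (m k : Fin 3) :
    Vc (.inl m) (((0 : Fin 3 → ℝ), Pi.single k 1) : Phase 3) = 0 := by simp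
@[simp] lemma Vc_inr_dp (m k : Fin 3) :
    Vc (.inr m) (((0 : Fin 3 → ℝ), Pi.single k 1) : Phase 3) = if m = k then 1 else 0 := by
  simp [Pi.single_apply]

set_option maxHeartbeats 1000000 in
/-- key formula for the Poisson bracket of the diagonal Hamiltonian against any quadratic form -/
lemma pbR_diag_qf (c1 c2 c3 : ℝ) (A : Idx → Idx → ℝ) (w : Phase 3) :
    pbR (qf (bm (dg c1 c2 c3) z33 (dg c1 c2 c3))) (qf A) w =
      ∑ k : Fin 3, 2 * (![c1, c2, c3] k) *
        (w.2 k * (∑ i : Idx, (A i (.inl k) + A (.inl k) i) * Vc i w) -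
         w.1 k * (∑ i : Idx, (A i (.inr k) + A (.inr k) i) * Vc i w)) := by
  unfold pbR
  simp only [fderiv_qf]
  simp only [Fintype.sum_sum_type, Vc_inl_dx, Vc_inr_dx, Vc_inl_dp, Vc_inr_dp, bm, dg, z33,
    Sum.elim_inl, Sum.elim_inr, mul_ite, mul_one, mul_zero, ite_mul, one_mul, zero_mul,
    add_zero, zero_add, Finset.sum_ite_eq, Finset.sum_ite_eq', Finset.mem_univ, if_true,
    Finset.sum_sub_distrib, Pi.zero_apply, ite_self, Finset.sum_const_zero]
  simp only [Fin.sum_univ_three, Vc_inl, Vc_inr]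
  simp only [Fin.reduceEq, reduceIte, Matrix.cons_val_zero, Matrix.cons_val_one,
    Matrix.cons_val_two, Matrix.head_cons, Matrix.vecHead, Matrix.vecTail, Function.comp,
    Fin.succ_zero_eq_one, Fin.succ_one_eq_two,
    mul_zero, zero_mul, add_zero, zero_add, mul_one, one_mul]
  ring

def AL1 : Idx → Idx → ℝ :=
  bm (od (-(1/4)) (-(1/4))) z33 (od (-(1/4)) (-(1/4)))
def AL2 : Idx → Idx → ℝ := bm z33 (od (-(1/4)) (1/4)) z33
def AL3 : Idx → Idx → ℝ := bm (dg (-(1/4)) (1/4) 0) z33 (dg (-(1/4)) (1/4) 0)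
def AL4 : Idx → Idx → ℝ := bm (dg (-(1/4)) (-(1/4)) 0) z33 (dg (-(1/4)) (-(1/4)) 0)
def AL5 : Idx → Idx → ℝ := bm (dg 0 0 (1/2)) z33 (dg 0 0 (1/2))

lemma L1_eq : L1 = qf AL1 := by
  funext w
  simp [qf, AL1, bm, dg, z33, od, L1, Fintype.sum_sum_type, Fin.sum_univ_three]
  ring

lemma L2_eq : L2 = qf AL2 := by
  funext w
  simp [qf, AL2, bm, dg, z33, od, L2, Fintype.sum_sum_type, Fin.sum_univ_three]
  ring

lemma L3_eq : L3 = qf AL3 := by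
  funext w
  simp [qf, AL3, bm, dg, z33, L3, Fintype.sum_sum_type, Fin.sum_univ_three]
  ring

lemma L4_eq : L4 = qf AL4 := by
  funext w
  simp [qf, AL4, bm, dg, z33, L4, Fintype.sum_sum_type, Fin.sum_univ_three]
  ring

lemma L5_eq : L5 = qf AL5 := by
  funext w
  simp [qf, AL5, bm, dg, z33, L5, Fintype.sum_sum_type, Fin.sum_univ_three]
  ring

lemma F1_eq (c1 c2 c3 : ℝ) :
    (fun w : Phase 3 => c1 * IR 0 w + c2 * IR 1 w + c3 * IR 2 w)
      = qf (bm (dg (c1/2) (c2/2) (c3/2)) z33 (dg (c1/2) (c2/2) (c3/2))) := by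
  funext w
  simp [qf, bm, dg, z33, IR, Fintype.sum_sum_type, Fin.sum_univ_three]
  ring

lemma pb_L1 (c1 c3 : ℝ) :
    pbR (qf (bm (dg (c1/2) (c1/2) (c3/2)) z33 (dg (c1/2) (c1/2) (c3/2)))) (qf AL1) = 0 := by
  funext w
  rw [pbR_diag_qf]
  simp [AL1, bm, dg, z33, od, Fintype.sum_sum_type, Fin.sum_univ_three]
  ring

lemma pb_L2 (c1 c3 : ℝ) :
    pbR (qf (bm (dg (c1/2) (c1/2) (c3/2)) z33 (dg (c1/2) (c1/2) (c3/2)))) (qf AL2) = 0 := by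
  funext w
  rw [pbR_diag_qf]
  simp [AL2, bm, dg, z33, od, Fintype.sum_sum_type, Fin.sum_univ_three]
  ring

lemma pb_diag (c1 c2 c3 d1 d2 d3 : ℝ) :
    pbR (qf (bm (dg c1 c2 c3) z33 (dg c1 c2 c3))) (qf (bm (dg d1 d2 d3) z33 (dg d1 d2 d3))) = 0 := by
  funext w
  rw [pbR_diag_qf]
  simp [bm, dg, z33, Fintype.sum_sum_type, Fin.sum_univ_three]
  ring

/-! ### Structure of homogeneous quadratic polynomials -/

lemma degree_two_structure {α : Type*} [DecidableEq α] (m : α →₀ ℕ) (hm : m.degree = 2) :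
    ∃ i j : α, m = Finsupp.single i 1 + Finsupp.single j 1 := by
  have hc : Multiset.card m.toMultiset = 2 := by
    rw [Finsupp.card_toMultiset]
    exact hm
  obtain ⟨x, y, hxy⟩ := Multiset.card_eq_two.mp hc
  refine ⟨x, y, ?_⟩
  ext a
  have h1 : (Finsupp.toMultiset m).count a = m a := Finsupp.count_toMultiset m a
  rw [hxy] at h1
  simp only [Finsupp.coe_add, Pi.add_apply, Finsupp.single_apply]
  rw [← h1]
  simp only [Multiset.insert_eq_cons, Multiset.count_cons, Multiset.count_singleton,
    eq_comm (b := a)]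
  ring

lemma sigma_eq_iff {α : Type*} [DecidableEq α] {a b i j : α} :
    Finsupp.single a (1:ℕ) + Finsupp.single b 1 = Finsupp.single i 1 + Finsupp.single j 1 ↔
      (a = i ∧ b = j) ∨ (a = j ∧ b = i) := by
  constructor
  · intro h
    have h' := congrArg Finsupp.toMultiset h
    simp only [Finsupp.toMultiset_add, Finsupp.toMultiset_single, one_nsmul,
      ← Multiset.singleton_add] at h'
    rw [Multiset.singleton_add, Multiset.singleton_add, Multiset.cons_eq_cons] at h'
    rcases h' with ⟨h1, h2⟩ | ⟨h1, cs, h2, h3⟩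
    · exact Or.inl ⟨h1, by simpa using h2⟩
    · rw [Multiset.singleton_eq_cons_iff] at h2
      obtain ⟨hbi, hcs⟩ := h2
      subst hcs
      simp only [Multiset.cons_zero, Multiset.singleton_inj] at h3
      exact Or.inr ⟨h3.symm, hbi⟩
  · rintro (⟨rfl, rfl⟩ | ⟨rfl, rfl⟩)
    · rfl
    · exact add_comm _ _

lemma mono_repr {α : Type*} [DecidableEq α] [Fintype α] (a b : α) (c : ℝ) (v : α → ℝ) :
    eval v (monomial (Finsupp.single a 1 + Finsupp.single b 1) c) =
      ∑ i : α, ∑ j : α,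
        ((if i = j then (1:ℝ) else 1/2) *
          coeff (Finsupp.single i 1 + Finsupp.single j 1)
            (monomial (Finsupp.single a 1 + Finsupp.single b 1) c)) * (v i * v j) := by
  have hL : eval v (monomial (Finsupp.single a 1 + Finsupp.single b 1) c) = c * (v a * v b) := by
    rw [eval_monomial, Finsupp.prod_add_index' (fun a => pow_zero (v a)) (fun a m n => pow_add (v a) m n)]
    simp [Finsupp.prod_single_index]
  rw [hL]
  have key : ∀ i j : α,
      ((if i = j then (1:ℝ) else 1/2) *
          coeff (Finsupp.single i 1 + Finsupp.single j 1)
            (monomial (Finsupp.single a 1 + Finsupp.single b 1) c)) * (v i * v j)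
      = (if j = b then (if i = a then (if a = b then (1:ℝ) else 1/2) * c * (v i * v j) else 0) else 0)
        + (if j = a then (if i = b then (if a = b then (0:ℝ) else (1/2) * c * (v i * v j)) else 0) else 0) := by
    intro i j
    rw [coeff_monomial]
    by_cases h1 : i = a <;> by_cases h2 : j = b <;> by_cases h3 : i = b <;> by_cases h4 : j = a <;>
      simp_all [sigma_eq_iff, eq_comm, Finsupp.single_eq_single_iff] <;> ring
  simp only [key, Finset.sum_add_distrib, Finset.sum_ite_eq', Finset.mem_univ, if_true]
  by_cases hab : a = b <;> simp [hab] <;> ring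

lemma quad_repr {α : Type*} [DecidableEq α] [Fintype α] (Q : MvPolynomial α ℝ)
    (hQ : Q.IsHomogeneous 2) (v : α → ℝ) :
    eval v Q = ∑ i : α, ∑ j : α,
      ((if i = j then (1:ℝ) else 1/2) *
        coeff (Finsupp.single i 1 + Finsupp.single j 1) Q) * (v i * v j) := by
  have hc : ∀ n : α →₀ ℕ, coeff n Q = ∑ m ∈ Q.support, coeff n (monomial m (coeff m Q)) := by
    intro n
    conv_lhs => rw [Q.as_sum]
    rw [coeff_sum]
  calc eval v Q = ∑ m ∈ Q.support, eval v (monomial m (coeff m Q)) := by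
        conv_lhs => rw [Q.as_sum]
        rw [map_sum]
    _ = ∑ m ∈ Q.support, ∑ i : α, ∑ j : α,
        ((if i = j then (1:ℝ) else 1/2) *
          coeff (Finsupp.single i 1 + Finsupp.single j 1) (monomial m (coeff m Q))) * (v i * v j) := by
        apply Finset.sum_congr rfl
        intro m hm
        have hdeg : m.degree = 2 := by
          by_contra h
          exact (MvPolynomial.mem_support_iff.mp hm) (hQ.coeff_eq_zero h)
        obtain ⟨A, B, rfl⟩ := degree_two_structure m hdeg
        exact mono_repr A B _ v
    _ = ∑ i : α, ∑ j : α,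
      ((if i = j then (1:ℝ) else 1/2) *
        coeff (Finsupp.single i 1 + Finsupp.single j 1) Q) * (v i * v j) := by
        rw [Finset.sum_comm]
        apply Finset.sum_congr rfl
        intro i _
        rw [Finset.sum_comm]
        apply Finset.sum_congr rfl
        intro j _
        rw [hc (Finsupp.single i 1 + Finsupp.single j 1)]
        rw [Finset.mul_sum, Finset.sum_mul]

/-- the coefficient matrix extracted from a homogeneous quadratic polynomial -/
def Apoly (Q : MvPolynomial Idx ℝ) : Idx → Idx → ℝ := fun i j =>
  (if i = j then (1:ℝ) else 1/2) * coeff (Finsupp.single i 1 + Finsupp.single j 1) Q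

lemma qf_of_poly (Q : MvPolynomial Idx ℝ) (hQ2 : Q.IsHomogeneous 2) :
    (fun w : Phase 3 => eval (Sum.elim w.1 w.2) Q) = qf (Apoly Q) := by
  funext w
  rw [quad_repr Q hQ2]
  simp only [qf, Apoly, Vc_elim]

lemma Apoly_symm (Q : MvPolynomial Idx ℝ) : ∀ i j, Apoly Q i j = Apoly Q j i := by
  intro i j
  unfold Apoly
  rw [add_comm (Finsupp.single i 1)]
  congr 1
  by_cases h : i = j <;> simp [h, eq_comm]

set_option maxHeartbeats 4000000 in
lemma solve (c1 c3 : ℝ) (hc1 : 0 < c1) (hc3 : 0 < c3) (hne : c1 ≠ c3) (A : Idx → Idx → ℝ)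
    (hsym : ∀ i j, A i j = A j i)
    (h : pbR (qf (bm (dg (c1/2) (c1/2) (c3/2)) z33 (dg (c1/2) (c1/2) (c3/2)))) (qf A) = 0) :
    ∃ r1 r2 r3 r4 r5 : ℝ, qf A = fun w =>
      r1 * L1 w + r2 * L2 w + r3 * L3 w + r4 * L4 w + r5 * L5 w := by
  have hE := fun w => congrFun h w
  simp only [pbR_diag_qf, Pi.zero_apply] at hE
  have ex0 := hE ((![1,0,0] : Fin 3 → ℝ), (![0,0,0] : Fin 3 → ℝ))
  simp [-mul_eq_zero, Fintype.sum_sum_type, Fin.sum_univ_three] at ex0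
  have ex1 := hE ((![0,1,0] : Fin 3 → ℝ), (![0,0,0] : Fin 3 → ℝ))
  simp [-mul_eq_zero, Fintype.sum_sum_type, Fin.sum_univ_three] at ex1
  have ex2 := hE ((![0,0,1] : Fin 3 → ℝ), (![0,0,0] : Fin 3 → ℝ))
  simp [-mul_eq_zero, Fintype.sum_sum_type, Fin.sum_univ_three] at ex2
  have ex01 := hE ((![1,1,0] : Fin 3 → ℝ), (![0,0,0] : Fin 3 → ℝ))
  simp [-mul_eq_zero, Fintype.sum_sum_type, Fin.sum_univ_three] at ex01
  have ex02 := hE ((![1,0,1] : Fin 3 → ℝ), (![0,0,0] : Fin 3 → ℝ))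
  simp [-mul_eq_zero, Fintype.sum_sum_type, Fin.sum_univ_three] at ex02
  have ex12 := hE ((![0,1,1] : Fin 3 → ℝ), (![0,0,0] : Fin 3 → ℝ))
  simp [-mul_eq_zero, Fintype.sum_sum_type, Fin.sum_univ_three] at ex12
  have ep02 := hE ((![0,0,0] : Fin 3 → ℝ), (![1,0,1] : Fin 3 → ℝ))
  simp [-mul_eq_zero, Fintype.sum_sum_type, Fin.sum_univ_three] at ep02
  have ep12 := hE ((![0,0,0] : Fin 3 → ℝ), (![0,1,1] : Fin 3 → ℝ))
  simp [-mul_eq_zero, Fintype.sum_sum_type, Fin.sum_univ_three] at ep12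
  have em00 := hE ((![1,0,0] : Fin 3 → ℝ), (![1,0,0] : Fin 3 → ℝ))
  simp [-mul_eq_zero, Fintype.sum_sum_type, Fin.sum_univ_three] at em00
  have em01 := hE ((![1,0,0] : Fin 3 → ℝ), (![0,1,0] : Fin 3 → ℝ))
  simp [-mul_eq_zero, Fintype.sum_sum_type, Fin.sum_univ_three] at em01
  have em02 := hE ((![1,0,0] : Fin 3 → ℝ), (![0,0,1] : Fin 3 → ℝ))
  simp [-mul_eq_zero, Fintype.sum_sum_type, Fin.sum_univ_three] at em02
  have em10 := hE ((![0,1,0] : Fin 3 → ℝ), (![1,0,0] : Fin 3 → ℝ))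
  simp [-mul_eq_zero, Fintype.sum_sum_type, Fin.sum_univ_three] at em10
  have em11 := hE ((![0,1,0] : Fin 3 → ℝ), (![0,1,0] : Fin 3 → ℝ))
  simp [-mul_eq_zero, Fintype.sum_sum_type, Fin.sum_univ_three] at em11
  have em12 := hE ((![0,1,0] : Fin 3 → ℝ), (![0,0,1] : Fin 3 → ℝ))
  simp [-mul_eq_zero, Fintype.sum_sum_type, Fin.sum_univ_three] at em12
  have em20 := hE ((![0,0,1] : Fin 3 → ℝ), (![1,0,0] : Fin 3 → ℝ))
  simp [-mul_eq_zero, Fintype.sum_sum_type, Fin.sum_univ_three] at em20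
  have em21 := hE ((![0,0,1] : Fin 3 → ℝ), (![0,1,0] : Fin 3 → ℝ))
  simp [-mul_eq_zero, Fintype.sum_sum_type, Fin.sum_univ_three] at em21
  have em22 := hE ((![0,0,1] : Fin 3 → ℝ), (![0,0,1] : Fin 3 → ℝ))
  simp [-mul_eq_zero, Fintype.sum_sum_type, Fin.sum_univ_three] at em22
  -- directed symmetry facts
  have s00 := hsym (Sum.inr 0) (Sum.inl 0)
  have s01 := hsym (Sum.inr 1) (Sum.inl 0)
  have s02 := hsym (Sum.inr 2) (Sum.inl 0)
  have s10 := hsym (Sum.inr 0) (Sum.inl 1)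
  have s11 := hsym (Sum.inr 1) (Sum.inl 1)
  have s12 := hsym (Sum.inr 2) (Sum.inl 1)
  have s20 := hsym (Sum.inr 0) (Sum.inl 2)
  have s21 := hsym (Sum.inr 1) (Sum.inl 2)
  have s22 := hsym (Sum.inr 2) (Sum.inl 2)
  have ta1 := hsym (Sum.inl 1) (Sum.inl 0)
  have ta2 := hsym (Sum.inl 2) (Sum.inl 0)
  have ta3 := hsym (Sum.inl 2) (Sum.inl 1)
  have td1 := hsym (Sum.inr 1) (Sum.inr 0)
  have td2 := hsym (Sum.inr 2) (Sum.inr 0)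
  have td3 := hsym (Sum.inr 2) (Sum.inr 1)
  have hc1' : c1 ≠ 0 := ne_of_gt hc1
  have hc3' : c3 ≠ 0 := ne_of_gt hc3
  have hsq : c1^2 - c3^2 ≠ 0 := by
    intro hq
    have hfac : (c1 - c3) * (c1 + c3) = 0 := by linear_combination hq
    rcases mul_eq_zero.mp hfac with h' | h'
    · exact hne (by linarith)
    · linarith
  -- diagonal cross entries vanish
  have hb00 : A (Sum.inl 0) (Sum.inr 0) = 0 := by
    have h' : c1 * A (Sum.inl 0) (Sum.inr 0) = 0 := by
      linear_combination (-(1/2)) * ex0 - (c1/2) * s00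
    exact (mul_eq_zero.mp h').resolve_left hc1'
  have hb11 : A (Sum.inl 1) (Sum.inr 1) = 0 := by
    have h' : c1 * A (Sum.inl 1) (Sum.inr 1) = 0 := by
      linear_combination (-(1/2)) * ex1 - (c1/2) * s11
    exact (mul_eq_zero.mp h').resolve_left hc1'
  have hb22 : A (Sum.inl 2) (Sum.inr 2) = 0 := by
    have h' : c3 * A (Sum.inl 2) (Sum.inr 2) = 0 := by
      linear_combination (-(1/2)) * ex2 - (c3/2) * s22
    exact (mul_eq_zero.mp h').resolve_left hc3'
  -- skew part in the 1-2 block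
  have hb10 : A (Sum.inl 1) (Sum.inr 0) = - A (Sum.inl 0) (Sum.inr 1) := by
    have h' : c1 * (A (Sum.inl 1) (Sum.inr 0) + A (Sum.inl 0) (Sum.inr 1)) = 0 := by
      linear_combination (-(1/2)) * ex01 - (c1/2) * s10 - (c1/2) * s00 - (c1/2) * s11
        - (c1/2) * s01 - c1 * hb00 - c1 * hb11
    have := (mul_eq_zero.mp h').resolve_left hc1'
    linarith
  -- 1-3 cross block vanishes
  have h5a : c1 * A (Sum.inl 2) (Sum.inr 0) + c3 * A (Sum.inl 0) (Sum.inr 2) = 0 := by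
    linear_combination (-(1/2)) * ex02 - (c1/2) * s20 - (c1/2) * s00 - (c3/2) * s22
      - (c3/2) * s02 - c1 * hb00 - c3 * hb22
  have h5b : c1 * A (Sum.inl 0) (Sum.inr 2) + c3 * A (Sum.inl 2) (Sum.inr 0) = 0 := by
    linear_combination (1/2) * ep02 - (c1/2) * s00 - (c1/2) * s02 - (c3/2) * s20
      - (c3/2) * s22 - c1 * hb00 - c3 * hb22
  have hb20 : A (Sum.inl 2) (Sum.inr 0) = 0 := by
    have h' : (c1^2 - c3^2) * A (Sum.inl 2) (Sum.inr 0) = 0 := by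
      linear_combination c1 * h5a - c3 * h5b
    exact (mul_eq_zero.mp h').resolve_left hsq
  have hb02 : A (Sum.inl 0) (Sum.inr 2) = 0 := by
    have h' : c3 * A (Sum.inl 0) (Sum.inr 2) = 0 := by
      linear_combination h5a - c1 * hb20
    exact (mul_eq_zero.mp h').resolve_left hc3'
  have h6a : c1 * A (Sum.inl 2) (Sum.inr 1) + c3 * A (Sum.inl 1) (Sum.inr 2) = 0 := by
    linear_combination (-(1/2)) * ex12 - (c1/2) * s21 - (c1/2) * s11 - (c3/2) * s22
      - (c3/2) * s12 - c1 * hb11 - c3 * hb22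
  have h6b : c1 * A (Sum.inl 1) (Sum.inr 2) + c3 * A (Sum.inl 2) (Sum.inr 1) = 0 := by
    linear_combination (1/2) * ep12 - (c1/2) * s11 - (c1/2) * s12 - (c3/2) * s21
      - (c3/2) * s22 - c1 * hb11 - c3 * hb22
  have hb21 : A (Sum.inl 2) (Sum.inr 1) = 0 := by
    have h' : (c1^2 - c3^2) * A (Sum.inl 2) (Sum.inr 1) = 0 := by
      linear_combination c1 * h6a - c3 * h6b
    exact (mul_eq_zero.mp h').resolve_left hsq
  have hb12 : A (Sum.inl 1) (Sum.inr 2) = 0 := by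
    have h' : c3 * A (Sum.inl 1) (Sum.inr 2) = 0 := by
      linear_combination h6a - c1 * hb21
    exact (mul_eq_zero.mp h').resolve_left hc3'
  -- momentum block equals position block
  have hd00 : A (Sum.inr 0) (Sum.inr 0) = A (Sum.inl 0) (Sum.inl 0) := by
    have h' : c1 * (A (Sum.inr 0) (Sum.inr 0) - A (Sum.inl 0) (Sum.inl 0)) = 0 := by
      linear_combination (-(1/2)) * em00
    have := (mul_eq_zero.mp h').resolve_left hc1'
    linarith
  have hd11 : A (Sum.inr 1) (Sum.inr 1) = A (Sum.inl 1) (Sum.inl 1) := by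
    have h' : c1 * (A (Sum.inr 1) (Sum.inr 1) - A (Sum.inl 1) (Sum.inl 1)) = 0 := by
      linear_combination (-(1/2)) * em11
    have := (mul_eq_zero.mp h').resolve_left hc1'
    linarith
  have hd22 : A (Sum.inr 2) (Sum.inr 2) = A (Sum.inl 2) (Sum.inl 2) := by
    have h' : c3 * (A (Sum.inr 2) (Sum.inr 2) - A (Sum.inl 2) (Sum.inl 2)) = 0 := by
      linear_combination (-(1/2)) * em22
    have := (mul_eq_zero.mp h').resolve_left hc3'
    linarith
  have hd01 : A (Sum.inr 0) (Sum.inr 1) = A (Sum.inl 0) (Sum.inl 1) := by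
    have h' : c1 * (A (Sum.inl 0) (Sum.inl 1) - A (Sum.inr 0) (Sum.inr 1)) = 0 := by
      linear_combination (1/2) * em01 - (c1/2) * ta1 + (c1/2) * td1 - (c1/2) * s11
        - c1 * hb11 + (c1/2) * s00 + c1 * hb00
    have := (mul_eq_zero.mp h').resolve_left hc1'
    linarith
  -- 1-3 xx and pp entries vanish
  have h8a : c3 * A (Sum.inl 0) (Sum.inl 2) - c1 * A (Sum.inr 0) (Sum.inr 2) = 0 := by
    linear_combination (1/2) * em02 - (c3/2) * ta2 + (c1/2) * td2 - (c3/2) * s22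
      - c3 * hb22 + (c1/2) * s00 + c1 * hb00
  have h8b : c1 * A (Sum.inl 0) (Sum.inl 2) - c3 * A (Sum.inr 0) (Sum.inr 2) = 0 := by
    linear_combination (1/2) * em20 - (c1/2) * ta2 + (c3/2) * td2 - (c1/2) * s00
      - c1 * hb00 + (c3/2) * s22 + c3 * hb22
  have ha02 : A (Sum.inl 0) (Sum.inl 2) = 0 := by
    have h' : (c1^2 - c3^2) * A (Sum.inl 0) (Sum.inl 2) = 0 := by
      linear_combination c1 * h8b - c3 * h8a
    exact (mul_eq_zero.mp h').resolve_left hsq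
  have hd02 : A (Sum.inr 0) (Sum.inr 2) = 0 := by
    have h' : c3 * A (Sum.inr 0) (Sum.inr 2) = 0 := by
      linear_combination c1 * ha02 - h8b
    exact (mul_eq_zero.mp h').resolve_left hc3'
  have h9a : c3 * A (Sum.inl 1) (Sum.inl 2) - c1 * A (Sum.inr 1) (Sum.inr 2) = 0 := by
    linear_combination (1/2) * em12 - (c3/2) * ta3 + (c1/2) * td3 - (c3/2) * s22
      - c3 * hb22 + (c1/2) * s11 + c1 * hb11
  have h9b : c1 * A (Sum.inl 1) (Sum.inl 2) - c3 * A (Sum.inr 1) (Sum.inr 2) = 0 := by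
    linear_combination (1/2) * em21 - (c1/2) * ta3 + (c3/2) * td3 - (c1/2) * s11
      - c1 * hb11 + (c3/2) * s22 + c3 * hb22
  have ha12 : A (Sum.inl 1) (Sum.inl 2) = 0 := by
    have h' : (c1^2 - c3^2) * A (Sum.inl 1) (Sum.inl 2) = 0 := by
      linear_combination c1 * h9b - c3 * h9a
    exact (mul_eq_zero.mp h').resolve_left hsq
  have hd12 : A (Sum.inr 1) (Sum.inr 2) = 0 := by
    have h' : c3 * A (Sum.inr 1) (Sum.inr 2) = 0 := by
      linear_combination c1 * ha12 - h9b
    exact (mul_eq_zero.mp h').resolve_left hc3'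
  refine ⟨-4 * A (Sum.inl 0) (Sum.inl 1), -4 * A (Sum.inl 0) (Sum.inr 1),
    2 * A (Sum.inl 1) (Sum.inl 1) - 2 * A (Sum.inl 0) (Sum.inl 0),
    -2 * A (Sum.inl 0) (Sum.inl 0) - 2 * A (Sum.inl 1) (Sum.inl 1),
    2 * A (Sum.inl 2) (Sum.inl 2), ?_⟩
  funext w
  simp only [qf, Fintype.sum_sum_type, Fin.sum_univ_three, Vc_inl, Vc_inr, L1, L2, L3, L4, L5]
  rw [ta1, ta2, ta3, td1, td2, td3, s00, s01, s02, s10, s11, s12, s20, s21, s22]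
  rw [hb00, hb11, hb22, hb10, hb20, hb02, hb21, hb12, hd00, hd11, hd22, hd01,
    ha02, hd02, ha12, hd12]
  ring

/-! ### Polynomial witnesses and linear independence -/

lemma hXX (a b : Fin 3 ⊕ Fin 3) : (X a * X b : MvPolynomial (Fin 3 ⊕ Fin 3) ℝ).IsHomogeneous 2 := by
  simpa using (isHomogeneous_X ℝ a).mul (isHomogeneous_X ℝ b)

lemma hCmul (c : ℝ) (φ : MvPolynomial (Fin 3 ⊕ Fin 3) ℝ) (h : φ.IsHomogeneous 2) :
    (C c * φ).IsHomogeneous 2 := by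
  simpa using (isHomogeneous_C _ c).mul h

lemma polyL1 : ∃ Q : MvPolynomial (Fin 3 ⊕ Fin 3) ℝ, Q.IsHomogeneous 2 ∧
    L1 = fun w => MvPolynomial.eval (Sum.elim w.1 w.2) Q := by
  refine ⟨C (-(1/2)) * (X (Sum.inl 0) * X (Sum.inl 1) + X (Sum.inr 0) * X (Sum.inr 1)),
    hCmul _ _ ((hXX _ _).add (hXX _ _)), ?_⟩
  funext w
  simp [L1]
  ring

lemma polyL2 : ∃ Q : MvPolynomial (Fin 3 ⊕ Fin 3) ℝ, Q.IsHomogeneous 2 ∧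
    L2 = fun w => MvPolynomial.eval (Sum.elim w.1 w.2) Q := by
  refine ⟨C (1/2) * (X (Sum.inr 0) * X (Sum.inl 1) - X (Sum.inl 0) * X (Sum.inr 1)),
    hCmul _ _ ((hXX _ _).sub (hXX _ _)), ?_⟩
  funext w
  simp [L2]
  ring

lemma polyL3 : ∃ Q : MvPolynomial (Fin 3 ⊕ Fin 3) ℝ, Q.IsHomogeneous 2 ∧
    L3 = fun w => MvPolynomial.eval (Sum.elim w.1 w.2) Q := by
  refine ⟨C (1/4) * (X (Sum.inl 1) * X (Sum.inl 1) + X (Sum.inr 1) * X (Sum.inr 1)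
      - X (Sum.inl 0) * X (Sum.inl 0) - X (Sum.inr 0) * X (Sum.inr 0)),
    hCmul _ _ ((((hXX _ _).add (hXX _ _)).sub (hXX _ _)).sub (hXX _ _)), ?_⟩
  funext w
  simp [L3]
  ring

lemma polyL4 : ∃ Q : MvPolynomial (Fin 3 ⊕ Fin 3) ℝ, Q.IsHomogeneous 2 ∧
    L4 = fun w => MvPolynomial.eval (Sum.elim w.1 w.2) Q := by
  refine ⟨C (-(1/4)) * (X (Sum.inl 0) * X (Sum.inl 0) + X (Sum.inr 0) * X (Sum.inr 0)
      + X (Sum.inl 1) * X (Sum.inl 1) + X (Sum.inr 1) * X (Sum.inr 1)),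
    hCmul _ _ ((((hXX _ _).add (hXX _ _)).add (hXX _ _)).add (hXX _ _)), ?_⟩
  funext w
  simp [L4]
  ring

lemma polyL5 : ∃ Q : MvPolynomial (Fin 3 ⊕ Fin 3) ℝ, Q.IsHomogeneous 2 ∧
    L5 = fun w => MvPolynomial.eval (Sum.elim w.1 w.2) Q := by
  refine ⟨C (1/2) * (X (Sum.inl 2) * X (Sum.inl 2) + X (Sum.inr 2) * X (Sum.inr 2)),
    hCmul _ _ ((hXX _ _).add (hXX _ _)), ?_⟩
  funext w
  simp [L5]
  ring

lemma linind : LinearIndependent ℝ Lfam := by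
  rw [Fintype.linearIndependent_iff]
  intro g hg
  have h1 := congrFun hg ((![1,0,0] : Fin 3 → ℝ), (![0,0,0] : Fin 3 → ℝ))
  have h2 := congrFun hg ((![0,1,0] : Fin 3 → ℝ), (![0,0,0] : Fin 3 → ℝ))
  have h3 := congrFun hg ((![0,0,1] : Fin 3 → ℝ), (![0,0,0] : Fin 3 → ℝ))
  have h4 := congrFun hg ((![1,1,0] : Fin 3 → ℝ), (![0,0,0] : Fin 3 → ℝ))
  have h5 := congrFun hg ((![1,0,0] : Fin 3 → ℝ), (![0,1,0] : Fin 3 → ℝ))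
  simp [Fin.sum_univ_five, Lfam, L1, L2, L3, L4, L5] at h1 h2 h3 h4 h5
  intro i
  fin_cases i <;> simp <;> linarith

end Aux


/-- Proposition 4.2: for `F₁ = p I₁ + p I₂ + q I₃` with `p ≠ q`, the space
of real homogeneous degree-2 polynomials in involution with `F₁` has dimension 5, with
basis `L₁,…,L₅`: each `L_μ` lies in this space, the `L_μ` are linearly independent, and
every element of the space is in their span. -/
theorem statement12 (p q : ℕ) (hp : 0 < p) (hq : 0 < q) (hpq : p ≠ q)
    (F1 : Phase 3 → ℝ)
    (hF1 : F1 = fun w => (p : ℝ) * IR 0 w + (p : ℝ) * IR 1 w + (q : ℝ) * IR 2 w) :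
    (∀ μ : Fin 5,
      (∃ Q : MvPolynomial (Fin 3 ⊕ Fin 3) ℝ, Q.IsHomogeneous 2 ∧
        Lfam μ = fun w => MvPolynomial.eval (Sum.elim w.1 w.2) Q) ∧
      pbR F1 (Lfam μ) = 0) ∧
    LinearIndependent ℝ Lfam ∧
    (∀ f : Phase 3 → ℝ,
      (∃ Q : MvPolynomial (Fin 3 ⊕ Fin 3) ℝ, Q.IsHomogeneous 2 ∧
        f = fun w => MvPolynomial.eval (Sum.elim w.1 w.2) Q) →
      pbR F1 f = 0 →
      f ∈ Submodule.span ℝ (Set.range Lfam)) := by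
  have hp' : (0:ℝ) < (p:ℝ) := by exact_mod_cast hp
  have hq' : (0:ℝ) < (q:ℝ) := by exact_mod_cast hq
  have hne : (p:ℝ) ≠ (q:ℝ) := by exact_mod_cast hpq
  have hF1' : F1 = qf (bm (dg ((p:ℝ)/2) ((p:ℝ)/2) ((q:ℝ)/2)) z33
      (dg ((p:ℝ)/2) ((p:ℝ)/2) ((q:ℝ)/2))) := by
    rw [hF1]
    exact F1_eq _ _ _
  refine ⟨?_, linind, ?_⟩
  · intro μ
    fin_cases μ
    · exact ⟨polyL1, by show pbR F1 L1 = 0; rw [hF1', L1_eq]; exact pb_L1 _ _⟩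
    · exact ⟨polyL2, by show pbR F1 L2 = 0; rw [hF1', L2_eq]; exact pb_L2 _ _⟩
    · exact ⟨polyL3, by show pbR F1 L3 = 0; rw [hF1', L3_eq]; exact pb_diag _ _ _ _ _ _⟩
    · exact ⟨polyL4, by show pbR F1 L4 = 0; rw [hF1', L4_eq]; exact pb_diag _ _ _ _ _ _⟩
    · exact ⟨polyL5, by show pbR F1 L5 = 0; rw [hF1', L5_eq]; exact pb_diag _ _ _ _ _ _⟩
  · intro f hex hpb
    obtain ⟨Q, hQ2, hfQ⟩ := hex
    have hfq : f = qf (Apoly Q) := by rw [hfQ, qf_of_poly Q hQ2]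
    rw [hF1', hfq] at hpb
    obtain ⟨r1, r2, r3, r4, r5, hrepr⟩ := solve _ _ hp' hq' hne _ (Apoly_symm Q) hpb
    rw [Submodule.mem_span_range_iff_exists_fun]
    refine ⟨![r1, r2, r3, r4, r5], ?_⟩
    funext w
    have h := congrFun hrepr w
    rw [hfq]
    simp only [Fin.sum_univ_five, Finset.sum_apply, Pi.smul_apply, smul_eq_mul,
      Pi.add_apply]
    show (![r1, r2, r3, r4, r5] 0) * L1 w + (![r1, r2, r3, r4, r5] 1) * L2 w
      + (![r1, r2, r3, r4, r5] 2) * L3 w + (![r1, r2, r3, r4, r5] 3) * L4 w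
      + (![r1, r2, r3, r4, r5] 4) * L5 w = qf (Apoly Q) w
    simp only [Matrix.cons_val_zero, Matrix.cons_val_one, Matrix.head_cons,
      Matrix.cons_val_two, Matrix.vecHead, Matrix.vecTail, Matrix.cons_val]
    rw [h]
    norm_num
    try ring

end
end
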